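/- arXiv:1312.5986 — 6 statements merged into one kernel-verified Lean document; each statement's English description precedes it below -/
import Mathlib

section
/- Let u ∈ C¹(ℝⁿ) and let B_R(a) be the ball of radius R centered at a. Then u(a) − ⨍_{B_R(a)} u = (1/n) ⨍_{B_R(a)} ⟨Du(x), a − x⟩ (Rⁿ/|a − x|ⁿ − 1) dx, where ⨍ denotes the average integral over the ball. -/
open MeasureTheory Metric Set
open scoped ENNReal

lemma aux_nontrivial (n : ℕ) (hn : 1 ≤ n) : Nontrivial (EuclideanSpace ℝ (Fin n)) := by
  have h : (EuclideanSpace.single (⟨0, hn⟩ : Fin n) (1:ℝ)) ≠ 0 := by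
    intro h
    have := congrArg (fun v => v ⟨0, hn⟩) h
    simp [EuclideanSpace.single_apply] at this
  exact nontrivial_of_ne _ _ h

lemma aux_ftc (n : ℕ) (u : EuclideanSpace ℝ (Fin n) → ℝ) (hu : ContDiff ℝ 1 u)
    (a x : EuclideanSpace ℝ (Fin n)) :
    u a - u x = ∫ t in (0:ℝ)..1, (fderiv ℝ u (a + t • (x - a))) (a - x) := by
  have hdcont : Continuous (fderiv ℝ u) := hu.continuous_fderiv one_ne_zero
  have hγ : ∀ t : ℝ, HasDerivAt (fun s : ℝ => a + s • (x - a)) (x - a) t := by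
    intro t
    simpa using ((hasDerivAt_id t).smul_const (x - a)).const_add a
  have hcomp : ∀ t : ℝ, HasDerivAt (fun s : ℝ => u (a + s • (x - a)))
      ((fderiv ℝ u (a + t • (x - a))) (x - a)) t := fun t =>
    ((hu.differentiable one_ne_zero).differentiableAt.hasFDerivAt).comp_hasDerivAt t (hγ t)
  have hint : IntervalIntegrable (fun t : ℝ => (fderiv ℝ u (a + t • (x - a))) (x - a))
      volume 0 1 :=
    ((hdcont.comp (continuous_const.add (continuous_id.smul continuous_const))).clm_apply
      continuous_const).intervalIntegrable 0 1
  have key := intervalIntegral.integral_eq_sub_of_hasDerivAt (fun t _ => hcomp t) hint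
  simp only [one_smul, zero_smul, add_zero] at key
  rw [show a + (x - a) = x by abel] at key
  have hneg : ∀ t : ℝ, (fderiv ℝ u (a + t • (x - a))) (a - x)
      = -((fderiv ℝ u (a + t • (x - a))) (x - a)) := by
    intro t
    rw [show a - x = -(x - a) by abel, map_neg]
  rw [intervalIntegral.integral_congr (g := fun t => -((fderiv ℝ u (a + t • (x - a))) (x - a)))
    (fun t _ => hneg t), intervalIntegral.integral_neg, key]
  ring

lemma aux_shell_integrable (n : ℕ) (hn : 1 ≤ n) (a : EuclideanSpace ℝ (Fin n)) (R : ℝ)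
    (hR : 0 < R) :
    IntegrableOn (fun y : EuclideanSpace ℝ (Fin n) => ‖y - a‖ / ‖y - a‖ ^ n)
      (ball a R) volume := by
  haveI := aux_nontrivial n hn
  have hnorm : Measurable fun y : EuclideanSpace ℝ (Fin n) => ‖y - a‖ :=
    (continuous_id.sub continuous_const).norm.measurable
  have hmeas : Measurable fun y : EuclideanSpace ℝ (Fin n) => ‖y - a‖ / ‖y - a‖ ^ n :=
    hnorm.div (hnorm.pow_const n)
  refine ⟨hmeas.aestronglyMeasurable, ?_⟩
  show (∫⁻ y in ball a R, ‖‖y - a‖ / ‖y - a‖ ^ n‖₊ ∂volume) < ⊤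
  set f : EuclideanSpace ℝ (Fin n) → ℝ := fun y => ‖y - a‖ / ‖y - a‖ ^ n with hf
  have hf0 : ∀ y, 0 ≤ f y := fun y => div_nonneg (norm_nonneg _) (pow_nonneg (norm_nonneg _) n)
  have cover : ball a R ⊆ {a} ∪ ⋃ k : ℕ, (ball a (R / 2 ^ k) \ ball a (R / 2 ^ (k + 1))) := by
    intro y hy
    by_cases hya : y = a
    · exact Or.inl (by simp [hya])
    right
    have hd0 : 0 < dist y a := dist_pos.2 hya
    have hdR : dist y a < R := mem_ball.1 hy
    have hex : ∃ m : ℕ, R / 2 ^ (m + 1) ≤ dist y a := by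
      obtain ⟨m, hm⟩ := exists_pow_lt_of_lt_one (div_pos hd0 hR) (by norm_num : (1:ℝ)/2 < 1)
      refine ⟨m, ?_⟩
      rw [div_pow, one_pow, div_lt_div_iff₀ (by positivity : (0:ℝ) < 2 ^ m) hR] at hm
      rw [div_le_iff₀ (by positivity : (0:ℝ) < 2 ^ (m + 1))]
      have h2 : (2:ℝ) ^ (m + 1) = 2 * 2 ^ m := by ring
      nlinarith [hd0]
    set k := Nat.find hex with hk
    have hk1 : R / 2 ^ (k + 1) ≤ dist y a := Nat.find_spec hex
    have hk2 : dist y a < R / 2 ^ k := by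
      rcases Nat.eq_zero_or_pos k with h0 | hpos
      · rw [h0]; simpa using hdR
      · obtain ⟨j, hj⟩ := Nat.exists_eq_succ_of_ne_zero hpos.ne'
        have hmin := Nat.find_min hex (by rw [← hk, hj]; exact Nat.lt_succ_self j)
        push_neg at hmin
        rw [hj]
        exact hmin
    exact mem_iUnion.2 ⟨k, mem_ball.2 hk2, fun hcon => absurd (mem_ball.1 hcon) (not_lt.2 hk1)⟩
  have hterm : ∀ k : ℕ,
      (∫⁻ y in ball a (R / 2 ^ k) \ ball a (R / 2 ^ (k + 1)), ‖f y‖₊ ∂volume)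
        ≤ ENNReal.ofReal ((2 ^ n * R) * (1 / 2) ^ k) *
            volume (ball (0 : EuclideanSpace ℝ (Fin n)) 1) := by
    intro k
    set c : ℝ := R / 2 ^ (k + 1) with hc
    have hc0 : 0 < c := by positivity
    have h2c : R / 2 ^ k = 2 * c := by rw [hc]; field_simp; ring
    have hbound : ∀ y ∈ ball a (R / 2 ^ k) \ ball a c,
        (‖f y‖₊ : ℝ≥0∞) ≤ ENNReal.ofReal (2 * c / c ^ n) := by
      rintro y ⟨hy1, hy2⟩
      have hyge : c ≤ ‖y - a‖ := by
        rw [mem_ball, dist_eq_norm] at hy2; exact not_lt.1 hy2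
      have hylt : ‖y - a‖ ≤ 2 * c := by
        rw [mem_ball, dist_eq_norm, h2c] at hy1; exact hy1.le
      have hle : f y ≤ 2 * c / c ^ n :=
        div_le_div₀ (by positivity) hylt (by positivity) (pow_le_pow_left₀ hc0.le hyge n)
      calc (‖f y‖₊ : ℝ≥0∞) = ENNReal.ofReal (f y) := Real.enorm_eq_ofReal (hf0 y)
        _ ≤ _ := ENNReal.ofReal_le_ofReal hle
    calc (∫⁻ y in ball a (R / 2 ^ k) \ ball a c, ‖f y‖₊ ∂volume)
        ≤ ∫⁻ _ in ball a (R / 2 ^ k) \ ball a c, ENNReal.ofReal (2 * c / c ^ n) ∂volume :=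
          setLIntegral_mono' (measurableSet_ball.diff measurableSet_ball) hbound
      _ = ENNReal.ofReal (2 * c / c ^ n) * volume (ball a (R / 2 ^ k) \ ball a c) :=
          setLIntegral_const _ _
      _ ≤ ENNReal.ofReal (2 * c / c ^ n) * volume (ball a (R / 2 ^ k)) := by
          gcongr
          exact diff_subset
      _ = ENNReal.ofReal (2 * c / c ^ n) *
            (ENNReal.ofReal ((R / 2 ^ k) ^ Module.finrank ℝ (EuclideanSpace ℝ (Fin n))) *
              volume (ball (0 : EuclideanSpace ℝ (Fin n)) 1)) := by
          rw [Measure.addHaar_ball volume a (by positivity : (0:ℝ) ≤ R / 2 ^ k)]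
      _ = ENNReal.ofReal ((2 ^ n * R) * (1 / 2) ^ k) *
            volume (ball (0 : EuclideanSpace ℝ (Fin n)) 1) := by
          rw [finrank_euclideanSpace_fin, ← mul_assoc,
            ← ENNReal.ofReal_mul (by positivity)]
          congr 2
          rw [h2c, hc]
          simp only [div_pow, mul_pow, one_div_pow]
          field_simp
          ring
  calc (∫⁻ y in ball a R, ‖f y‖₊ ∂volume)
      ≤ ∫⁻ y in {a} ∪ ⋃ k : ℕ, (ball a (R / 2 ^ k) \ ball a (R / 2 ^ (k + 1))), ‖f y‖₊ ∂volume :=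
        lintegral_mono_set cover
    _ ≤ (∫⁻ y in ({a} : Set (EuclideanSpace ℝ (Fin n))), ‖f y‖₊ ∂volume) +
          ∫⁻ y in ⋃ k : ℕ, (ball a (R / 2 ^ k) \ ball a (R / 2 ^ (k + 1))), ‖f y‖₊ ∂volume :=
        lintegral_union_le _ _ _
    _ ≤ 0 + ∑' k : ℕ, ∫⁻ y in ball a (R / 2 ^ k) \ ball a (R / 2 ^ (k + 1)), ‖f y‖₊ ∂volume := by
        gcongr
        · exact le_of_eq (setLIntegral_measure_zero _ _ (measure_singleton a))
        · exact lintegral_iUnion_le _ _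
    _ ≤ 0 + ∑' k : ℕ, ENNReal.ofReal ((2 ^ n * R) * (1 / 2) ^ k) *
          volume (ball (0 : EuclideanSpace ℝ (Fin n)) 1) := by
        gcongr with k
        exact hterm k
    _ = (ENNReal.ofReal (2 ^ n * R) * volume (ball (0 : EuclideanSpace ℝ (Fin n)) 1)) *
          ∑' k : ℕ, ENNReal.ofReal ((1:ℝ) / 2) ^ k := by
        rw [zero_add, ← ENNReal.tsum_mul_left]
        congr 1
        funext k
        rw [ENNReal.ofReal_mul (by positivity), ENNReal.ofReal_pow (by norm_num)]
        ring
    _ < ⊤ := by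
        refine ENNReal.mul_lt_top (ENNReal.mul_lt_top ENNReal.ofReal_lt_top
          measure_ball_lt_top) ?_
        rw [ENNReal.tsum_geometric]
        refine ENNReal.inv_lt_top.2 ?_
        rw [tsub_pos_iff_lt]
        exact ENNReal.ofReal_lt_one.2 (by norm_num)

lemma aux_tint (n : ℕ) (hn : 1 ≤ n) (a : EuclideanSpace ℝ (Fin n)) (R : ℝ) (hR : 0 < R)
    (v : ℝ) (y : EuclideanSpace ℝ (Fin n)) (hyB : y ∈ ball a R) (hya : y ≠ a) :
    ∫ t in Ioc (0:ℝ) 1, (t ^ (n + 1))⁻¹ * (ball a (t * R)).indicator (fun _ => v) y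
      = v * ((R ^ n / ‖y - a‖ ^ n - 1) / n) := by
  set c : ℝ := dist y a / R with hc
  have hd0 : 0 < dist y a := dist_pos.2 hya
  have hc0 : 0 < c := div_pos hd0 hR
  have hc1 : c < 1 := (div_lt_one hR).2 (mem_ball.1 hyB)
  have hcongr : ∀ t : ℝ, (t ^ (n + 1))⁻¹ * (ball a (t * R)).indicator (fun _ => v) y
      = (Ioi c).indicator (fun t => (t ^ (n + 1))⁻¹ * v) t := by
    intro t
    have hiff : y ∈ ball a (t * R) ↔ c < t := by
      rw [mem_ball, hc, div_lt_iff₀ hR]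
    by_cases h : c < t
    · rw [Set.indicator_of_mem (hiff.2 h), Set.indicator_of_mem (Set.mem_Ioi.2 h)]
    · rw [Set.indicator_of_notMem (fun hmem => h (hiff.1 hmem)),
        Set.indicator_of_notMem (by simpa using h), mul_zero]
  rw [setIntegral_congr_fun measurableSet_Ioc (fun t _ => hcongr t),
    setIntegral_indicator measurableSet_Ioi]
  have hinter : Ioc (0:ℝ) 1 ∩ Ioi c = Ioc c 1 := by
    ext z
    constructor
    · rintro ⟨⟨_, hz1⟩, hz2⟩; exact ⟨hz2, hz1⟩
    · rintro ⟨hz1, hz2⟩; exact ⟨⟨hc0.trans hz1, hz2⟩, hz1⟩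
  rw [hinter, ← intervalIntegral.integral_of_le hc1.le,
    intervalIntegral.integral_mul_const]
  have hzpow : ∀ t : ℝ, (t ^ (n + 1))⁻¹ = t ^ (-((n:ℤ) + 1)) := by
    intro t
    rw [zpow_neg]
    norm_cast
  rw [intervalIntegral.integral_congr (g := fun t : ℝ => t ^ (-((n:ℤ) + 1)))
    (fun t _ => hzpow t)]
  rw [integral_zpow (Or.inr ⟨by omega, by
    rw [Set.uIcc_of_le hc1.le]
    rintro ⟨h0, _⟩
    exact absurd h0 (not_le.2 hc0)⟩)]
  have hne : (‖y - a‖ : ℝ) ≠ 0 := by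
    rw [← dist_eq_norm]; exact hd0.ne'
  have h1 : (-((n:ℤ) + 1) + 1) = -(n:ℤ) := by ring
  rw [h1]
  rw [one_zpow, zpow_neg, zpow_natCast, hc, div_pow, inv_div, dist_eq_norm]
  have hnn : ((n:ℝ)) ≠ 0 := by positivity
  push_cast
  field_simp
  linear_combination (-(‖y - a‖ ^ n) * v + R ^ n * v) * mul_inv_cancel₀ hnn

lemma aux_cov (n : ℕ) (u : EuclideanSpace ℝ (Fin n) → ℝ)
    (hu : ContDiff ℝ 1 u) (a : EuclideanSpace ℝ (Fin n)) (R : ℝ) (hR : 0 < R)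
    (t : ℝ) (ht : t ∈ Ioc (0:ℝ) 1) :
    ∫ x in ball a R, (fderiv ℝ u (a + t • (x - a))) (a - x)
      = (t ^ (n + 1))⁻¹ * ∫ y in ball a (t * R), (fderiv ℝ u y) (a - y) := by
  set g : EuclideanSpace ℝ (Fin n) → ℝ := fun y => (fderiv ℝ u y) (a - y) with hg
  have ht0 : 0 < t := ht.1
  set φ : EuclideanSpace ℝ (Fin n) → EuclideanSpace ℝ (Fin n) := fun x => a + t • (x - a) with hφ
  have himg : φ '' ball a R = ball a (t * R) := by
    ext y
    constructor
    · rintro ⟨x, hx, rfl⟩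
      have hd : dist (φ x) a = t * dist x a := by
        simp only [hφ, dist_eq_norm, add_sub_cancel_left, norm_smul, Real.norm_eq_abs,
          abs_of_pos ht0]
      rw [mem_ball, hd]
      exact (mul_lt_mul_iff_right₀ ht0).2 (mem_ball.1 hx)
    · intro hy
      refine ⟨a + t⁻¹ • (y - a), ?_, ?_⟩
      · rw [mem_ball]
        have hd : dist (a + t⁻¹ • (y - a)) a = t⁻¹ * dist y a := by
          simp only [dist_eq_norm, add_sub_cancel_left, norm_smul, Real.norm_eq_abs,
            abs_of_pos (inv_pos.2 ht0)]
        rw [hd, inv_mul_lt_iff₀ ht0]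
        exact mem_ball.1 hy
      · simp only [hφ, add_sub_cancel_left, smul_smul, mul_inv_cancel₀ ht0.ne', one_smul]
        abel
  have hder : ∀ x ∈ ball a R, HasFDerivWithinAt φ
      (t • (ContinuousLinearMap.id ℝ (EuclideanSpace ℝ (Fin n)))) (ball a R) x := by
    intro x _
    exact ((((hasFDerivAt_id x).sub_const a).const_smul t).const_add a).hasFDerivWithinAt
  have hinj : InjOn φ (ball a R) := by
    intro x hx y hy h
    have h1 : t • (x - a) = t • (y - a) := by
      have := h; simp only [hφ] at this
      exact add_left_cancel this
    have h2 : x - a = y - a := smul_right_injective _ ht0.ne' h1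
    have := congrArg (· + a) h2
    simpa using this
  have hdet : |(t • (ContinuousLinearMap.id ℝ (EuclideanSpace ℝ (Fin n)))).det| = t ^ n := by
    have h1 : (t • (ContinuousLinearMap.id ℝ (EuclideanSpace ℝ (Fin n)))).det = t ^ n := by
      simp [ContinuousLinearMap.det, LinearMap.det_smul, finrank_euclideanSpace_fin]
    rw [h1, abs_of_pos (pow_pos ht0 n)]
  have hcov := integral_image_eq_integral_abs_det_fderiv_smul volume measurableSet_ball hder hinj g
  rw [himg] at hcov
  have hRHS : ∀ x : EuclideanSpace ℝ (Fin n),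
      |(t • (ContinuousLinearMap.id ℝ (EuclideanSpace ℝ (Fin n)))).det| • g (φ x)
        = t ^ (n + 1) * (fderiv ℝ u (a + t • (x - a))) (a - x) := by
    intro x
    rw [hdet]
    have h1 : a - φ x = t • (a - x) := by
      simp only [hφ, smul_sub]
      abel
    have h2 : g (φ x) = t * (fderiv ℝ u (a + t • (x - a))) (a - x) := by
      rw [hg]
      show (fderiv ℝ u (φ x)) (a - φ x) = _
      rw [h1, ContinuousLinearMap.map_smul, hφ]
      simp [smul_eq_mul]
    rw [h2, smul_eq_mul]
    ring
  rw [setIntegral_congr_fun measurableSet_ball (fun x _ => hRHS x)] at hcov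
  rw [MeasureTheory.integral_const_mul] at hcov
  rw [hcov]
  rw [← mul_assoc, inv_mul_cancel₀ (by positivity : (t:ℝ) ^ (n+1) ≠ 0), one_mul]

lemma aux_fub1 (n : ℕ) (u : EuclideanSpace ℝ (Fin n) → ℝ)
    (hu : ContDiff ℝ 1 u) (a : EuclideanSpace ℝ (Fin n)) (R : ℝ) :
    ∫ x in ball a R, ∫ t in Ioc (0:ℝ) 1, (fderiv ℝ u (a + t • (x - a))) (a - x)
      = ∫ t in Ioc (0:ℝ) 1, ∫ x in ball a R, (fderiv ℝ u (a + t • (x - a))) (a - x) := by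
  have hdcont : Continuous (fderiv ℝ u) := hu.continuous_fderiv one_ne_zero
  have hFc : Continuous fun p : EuclideanSpace ℝ (Fin n) × ℝ =>
      (fderiv ℝ u (a + p.2 • (p.1 - a))) (a - p.1) :=
    (hdcont.comp (continuous_const.add (continuous_snd.smul
      (continuous_fst.sub continuous_const)))).clm_apply
      (continuous_const.sub continuous_fst)
  have hint : Integrable (Function.uncurry fun (x : EuclideanSpace ℝ (Fin n)) (t : ℝ) =>
      (fderiv ℝ u (a + t • (x - a))) (a - x))
      ((volume.restrict (ball a R)).prod (volume.restrict (Ioc (0:ℝ) 1))) := by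
    rw [Measure.prod_restrict]
    have hK : IsCompact (closedBall a R ×ˢ Icc (0:ℝ) 1) :=
      (isCompact_closedBall a R).prod isCompact_Icc
    have h2 : IntegrableOn (fun p : EuclideanSpace ℝ (Fin n) × ℝ =>
        (fderiv ℝ u (a + p.2 • (p.1 - a))) (a - p.1))
        (closedBall a R ×ˢ Icc (0:ℝ) 1) (volume.prod volume) :=
      hFc.continuousOn.integrableOn_compact hK
    exact h2.mono_set (prod_mono ball_subset_closedBall Ioc_subset_Icc_self)
  exact integral_integral_swap hint

lemma aux_fub2 (n : ℕ) (hn : 1 ≤ n) (u : EuclideanSpace ℝ (Fin n) → ℝ)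
    (hu : ContDiff ℝ 1 u) (a : EuclideanSpace ℝ (Fin n)) (R : ℝ) (hR : 0 < R)
    (C : ℝ) (hC : ∀ y ∈ closedBall a R, ‖fderiv ℝ u y‖ ≤ C) :
    Integrable (Function.uncurry fun (t : ℝ) (y : EuclideanSpace ℝ (Fin n)) =>
        (t ^ (n + 1))⁻¹ * (ball a (t * R)).indicator (fun z => (fderiv ℝ u z) (a - z)) y)
      ((volume.restrict (Ioc (0:ℝ) 1)).prod (volume.restrict (ball a R))) := by
  haveI := aux_nontrivial n hn
  set g : EuclideanSpace ℝ (Fin n) → ℝ := fun z => (fderiv ℝ u z) (a - z) with hg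
  have hdcont : Continuous (fderiv ℝ u) := hu.continuous_fderiv one_ne_zero
  have hgcont : Continuous g := hdcont.clm_apply (continuous_const.sub continuous_id)
  have hS : MeasurableSet {p : ℝ × EuclideanSpace ℝ (Fin n) | dist p.2 a < p.1 * R} :=
    (isOpen_lt (continuous_snd.dist continuous_const)
      (continuous_fst.mul continuous_const)).measurableSet
  have hHmeas' : Measurable (Function.uncurry fun (t : ℝ) (y : EuclideanSpace ℝ (Fin n)) =>
      (t ^ (n + 1))⁻¹ * (ball a (t * R)).indicator g y) := by
    have heq : (Function.uncurry fun (t : ℝ) (y : EuclideanSpace ℝ (Fin n)) =>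
        (t ^ (n + 1))⁻¹ * (ball a (t * R)).indicator g y)
        = fun p : ℝ × EuclideanSpace ℝ (Fin n) => (p.1 ^ (n + 1))⁻¹ *
            ({p : ℝ × EuclideanSpace ℝ (Fin n) | dist p.2 a < p.1 * R}.indicator
              (fun q => g q.2) p) := by
      funext p
      by_cases h : dist p.2 a < p.1 * R
      · show (p.1 ^ (n + 1))⁻¹ * (ball a (p.1 * R)).indicator g p.2 = _
        rw [Set.indicator_of_mem (mem_ball.2 h),
          Set.indicator_of_mem (show p ∈ {p : ℝ × EuclideanSpace ℝ (Fin n) |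
            dist p.2 a < p.1 * R} from h)]
      · show (p.1 ^ (n + 1))⁻¹ * (ball a (p.1 * R)).indicator g p.2 = _
        rw [Set.indicator_of_notMem (fun hmem => h (mem_ball.1 hmem)),
          Set.indicator_of_notMem (show p ∉ {p : ℝ × EuclideanSpace ℝ (Fin n) |
            dist p.2 a < p.1 * R} from h)]
    rw [heq]
    exact ((measurable_fst.pow_const (n + 1)).inv).mul
      ((hgcont.comp continuous_snd).measurable.indicator hS)
  have hae_ne : ∀ᵐ y ∂volume.restrict (ball a R), y ≠ a := by
    refine (ae_iff).2 ?_
    have h1 : {y : EuclideanSpace ℝ (Fin n) | ¬ y ≠ a} = {a} := by ext z; simp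
    rw [h1]
    exact le_antisymm ((Measure.restrict_le_self _).trans_eq (measure_singleton a)) zero_le
  refine (integrable_prod_iff' hHmeas'.aestronglyMeasurable).2 ⟨?_, ?_⟩
  · filter_upwards [hae_ne] with y hya
    set c : ℝ := dist y a / R with hc
    have hd0 : 0 < dist y a := dist_pos.2 hya
    have hc0 : 0 < c := div_pos hd0 hR
    have hcongr : (fun t : ℝ => (t ^ (n + 1))⁻¹ * (ball a (t * R)).indicator g y)
        = fun t => (Ioi c).indicator (fun s => (s ^ (n + 1))⁻¹ * g y) t := by
      funext t
      have hiff : y ∈ ball a (t * R) ↔ c < t := by rw [mem_ball, hc, div_lt_iff₀ hR]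
      by_cases h : c < t
      · rw [Set.indicator_of_mem (hiff.2 h), Set.indicator_of_mem (Set.mem_Ioi.2 h)]
      · rw [Set.indicator_of_notMem (fun hmem => h (hiff.1 hmem)),
          Set.indicator_of_notMem (by simpa using h), mul_zero]
    show Integrable (fun t : ℝ => (t ^ (n + 1))⁻¹ * (ball a (t * R)).indicator g y) _
    rw [hcongr]
    refine Integrable.mono' (integrable_const ((c ^ (n + 1))⁻¹ * |g y|)) ?_ ?_
    · exact (((measurable_id.pow_const (n + 1)).inv.mul measurable_const).indicator
        measurableSet_Ioi).aestronglyMeasurable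
    · refine (ae_restrict_iff' measurableSet_Ioc).2 (Filter.Eventually.of_forall fun t ht => ?_)
      by_cases h : c < t
      · rw [Set.indicator_of_mem (Set.mem_Ioi.2 h), Real.norm_eq_abs, abs_mul, abs_inv,
          abs_pow, abs_of_pos ht.1]
        refine mul_le_mul_of_nonneg_right ?_ (abs_nonneg _)
        exact inv_anti₀ (pow_pos hc0 _) (pow_le_pow_left₀ hc0.le h.le _)
      · rw [Set.indicator_of_notMem (by simpa using h), norm_zero]
        positivity
  · have hDint : Integrable
        (fun y : EuclideanSpace ℝ (Fin n) => (C * R ^ n / n) * (‖y - a‖ / ‖y - a‖ ^ n))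
        (volume.restrict (ball a R)) :=
      (aux_shell_integrable n hn a R hR).const_mul _
    refine Integrable.mono' hDint ?_ ?_
    · exact ((hHmeas'.comp measurable_swap).norm.aestronglyMeasurable).integral_prod_right'
    · filter_upwards [hae_ne, ae_restrict_mem measurableSet_ball] with y hya hyB
      have hd0 : 0 < ‖y - a‖ := by
        rw [norm_pos_iff]; exact sub_ne_zero.2 hya
      have hdR : ‖y - a‖ < R := by rw [← dist_eq_norm]; exact mem_ball.1 hyB
      have hcalc : ∫ t in Ioc (0:ℝ) 1,
          ‖(t ^ (n + 1))⁻¹ * (ball a (t * R)).indicator g y‖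
          = |g y| * ((R ^ n / ‖y - a‖ ^ n - 1) / n) := by
        rw [setIntegral_congr_fun measurableSet_Ioc
          (fun t ht => show ‖(t ^ (n + 1))⁻¹ * (ball a (t * R)).indicator g y‖
            = (t ^ (n + 1))⁻¹ * (ball a (t * R)).indicator (fun _ => |g y|) y from by
              rw [Real.norm_eq_abs, abs_mul, abs_inv, abs_pow, abs_of_pos ht.1]
              congr 1
              by_cases h : y ∈ ball a (t * R)
              · rw [Set.indicator_of_mem h, Set.indicator_of_mem h]
              · rw [Set.indicator_of_notMem h, Set.indicator_of_notMem h, abs_zero])]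
        exact aux_tint n hn a R hR (|g y|) y hyB hya
      show ‖∫ t in Ioc (0:ℝ) 1, ‖(t ^ (n + 1))⁻¹ * (ball a (t * R)).indicator g y‖‖ ≤ _
      rw [hcalc]
      have hker0 : 0 ≤ (R ^ n / ‖y - a‖ ^ n - 1) / n := by
        refine div_nonneg ?_ (Nat.cast_nonneg n)
        have h1 : ‖y - a‖ ^ n ≤ R ^ n := pow_le_pow_left₀ hd0.le hdR.le n
        have h2 : 1 ≤ R ^ n / ‖y - a‖ ^ n := (one_le_div (pow_pos hd0 n)).2 h1
        linarith
      have hC0 : 0 ≤ C := le_trans (norm_nonneg _) (hC a (mem_closedBall_self hR.le))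
      have hgy : |g y| ≤ C * ‖y - a‖ := by
        calc |g y| ≤ ‖fderiv ℝ u y‖ * ‖a - y‖ := (fderiv ℝ u y).le_opNorm _
          _ ≤ C * ‖a - y‖ := mul_le_mul_of_nonneg_right
              (hC y (ball_subset_closedBall hyB)) (norm_nonneg _)
          _ = C * ‖y - a‖ := by rw [norm_sub_rev]
      rw [Real.norm_eq_abs, abs_of_nonneg (mul_nonneg (abs_nonneg _) hker0)]
      have hn0 : (0:ℝ) < n := by exact_mod_cast hn
      calc |g y| * ((R ^ n / ‖y - a‖ ^ n - 1) / n)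
          ≤ (C * ‖y - a‖) * ((R ^ n / ‖y - a‖ ^ n) / n) := by
            refine mul_le_mul hgy ?_ hker0 (by positivity)
            gcongr
            linarith
        _ = (C * R ^ n / n) * (‖y - a‖ / ‖y - a‖ ^ n) := by
            field_simp

theorem sobolev_formula_ball
    (n : ℕ) (hn : 1 ≤ n) (u : EuclideanSpace ℝ (Fin n) → ℝ)
    (hu : ContDiff ℝ 1 u) (a : EuclideanSpace ℝ (Fin n)) (R : ℝ) (hR : 0 < R) :
    u a - ⨍ x in ball a R, u x
      = (1 / n) * ⨍ x in ball a R,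
          (fderiv ℝ u x) (a - x) * (R ^ n / ‖a - x‖ ^ n - 1) := by
  haveI := aux_nontrivial n hn
  have hBfin : volume (ball a R) < ⊤ := measure_ball_lt_top
  have hB0 : volume (ball a R) ≠ 0 := (measure_ball_pos volume a hR).ne'
  have hτ : (volume (ball a R)).toReal ≠ 0 := ENNReal.toReal_ne_zero.2 ⟨hB0, hBfin.ne⟩
  have hdcont : Continuous (fderiv ℝ u) := hu.continuous_fderiv one_ne_zero
  obtain ⟨C, hC⟩ : ∃ C, ∀ y ∈ closedBall a R, ‖fderiv ℝ u y‖ ≤ C :=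
    (isCompact_closedBall a R).exists_bound_of_continuousOn hdcont.continuousOn
  have hui : IntegrableOn u (ball a R) volume :=
    (hu.continuous.continuousOn.integrableOn_compact
      (isCompact_closedBall a R)).mono_set ball_subset_closedBall
  have hae_ne : ∀ᵐ y ∂volume.restrict (ball a R), y ≠ a := by
    refine (ae_iff).2 ?_
    have h1 : {y : EuclideanSpace ℝ (Fin n) | ¬ y ≠ a} = {a} := by ext z; simp
    rw [h1]
    exact le_antisymm ((Measure.restrict_le_self _).trans_eq (measure_singleton a)) zero_le
  have key : ∫ x in ball a R, (u a - u x)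
      = (1/(n:ℝ)) * ∫ x in ball a R,
          (fderiv ℝ u x) (a - x) * (R ^ n / ‖a - x‖ ^ n - 1) := by
    calc ∫ x in ball a R, (u a - u x)
        = ∫ x in ball a R, ∫ t in Ioc (0:ℝ) 1, (fderiv ℝ u (a + t • (x - a))) (a - x) := by
          refine setIntegral_congr_fun measurableSet_ball fun x _ => ?_
          rw [aux_ftc n u hu a x, intervalIntegral.integral_of_le zero_le_one]
      _ = ∫ t in Ioc (0:ℝ) 1, ∫ x in ball a R, (fderiv ℝ u (a + t • (x - a))) (a - x) :=
          aux_fub1 n u hu a R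
      _ = ∫ t in Ioc (0:ℝ) 1, ∫ y in ball a R,
            (t ^ (n + 1))⁻¹ * (ball a (t * R)).indicator
              (fun z => (fderiv ℝ u z) (a - z)) y := by
          refine setIntegral_congr_fun measurableSet_Ioc fun t ht => ?_
          rw [aux_cov n u hu a R hR t ht, MeasureTheory.integral_const_mul]
          congr 1
          have hsub : ball a (t * R) ⊆ ball a R :=
            ball_subset_ball (mul_le_of_le_one_left hR.le ht.2)
          rw [setIntegral_indicator measurableSet_ball,
            inter_eq_self_of_subset_right hsub]
      _ = ∫ y in ball a R, ∫ t in Ioc (0:ℝ) 1,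
            (t ^ (n + 1))⁻¹ * (ball a (t * R)).indicator
              (fun z => (fderiv ℝ u z) (a - z)) y :=
          integral_integral_swap (aux_fub2 n hn u hu a R hR C hC)
      _ = ∫ y in ball a R, (fderiv ℝ u y) (a - y) * ((R ^ n / ‖y - a‖ ^ n - 1) / n) := by
          refine integral_congr_ae ?_
          filter_upwards [hae_ne, ae_restrict_mem measurableSet_ball] with y hya hyB
          have h2 := aux_tint n hn a R hR ((fderiv ℝ u y) (a - y)) y hyB hya
          rw [← h2]
          refine setIntegral_congr_fun measurableSet_Ioc fun t _ => ?_
          congr 1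
      _ = (1/(n:ℝ)) * ∫ x in ball a R,
            (fderiv ℝ u x) (a - x) * (R ^ n / ‖a - x‖ ^ n - 1) := by
          rw [← MeasureTheory.integral_const_mul]
          refine setIntegral_congr_fun measurableSet_ball fun y _ => ?_
          rw [show ‖a - y‖ = ‖y - a‖ from norm_sub_rev a y]
          ring
  rw [setAverage_eq, setAverage_eq, smul_eq_mul, smul_eq_mul]
  have hsub2 : ∫ x in ball a R, (u a - u x)
      = (volume (ball a R)).toReal * u a - ∫ x in ball a R, u x := by
    rw [integral_sub (show Integrable (fun _ => u a) (volume.restrict (ball a R)) from integrableOn_const hBfin.ne) hui, setIntegral_const,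
      smul_eq_mul, measureReal_def]
  have key2 : (volume (ball a R)).toReal * u a - ∫ x in ball a R, u x
      = (1/(n:ℝ)) * ∫ x in ball a R,
          (fderiv ℝ u x) (a - x) * (R ^ n / ‖a - x‖ ^ n - 1) := by
    rw [← hsub2]; exact key
  rw [← measureReal_def] at key2 hτ
  linear_combination (volume.real (ball a R))⁻¹ * key2 - u a * inv_mul_cancel₀ hτ
end

section
/- Let C ⊆ ℝⁿ be a compact convex set with nonempty interior, a ∈ C, and u : ℝⁿ → ℝ be C¹ on a neighborhood of C. Then u(a) − ⨍_C u = (1/n) ⨍_C Du(x)[a − x] (γ(x)^{-n} − 1) dx, where γ is the Minkowski gauge of C centered at a. -/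
open MeasureTheory Set Metric

section aux
variable {n : ℕ} {C : Set (EuclideanSpace ℝ (Fin n))} {a : EuclideanSpace ℝ (Fin n)}
  {γ : EuclideanSpace ℝ (Fin n) → ℝ} {R : ℝ}

lemma starshape_aux (hconv : Convex ℝ C) (ha : a ∈ C)
    {x : EuclideanSpace ℝ (Fin n)} {l l' : ℝ} (hl : 0 < l) (hll' : l ≤ l')
    (hx : a + l⁻¹ • (x - a) ∈ C) : a + l'⁻¹ • (x - a) ∈ C := by
  have hl' : 0 < l' := hl.trans_le hll'
  have key : a + l'⁻¹ • (x - a)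
      = (l / l') • (a + l⁻¹ • (x - a)) + (1 - l / l') • a := by
    match_scalars <;> (field_simp; try ring)
  rw [key]
  exact hconv hx ha (by positivity)
    (by rw [sub_nonneg]; exact (div_le_one hl').mpr hll') (by ring)

variable (hγ : ∀ x, γ x = sInf {l : ℝ | 0 < l ∧ a + l⁻¹ • (x - a) ∈ C})

include hγ

lemma gam_le_one {x : EuclideanSpace ℝ (Fin n)} (hx : x ∈ C) : γ x ≤ 1 := by
  rw [hγ]
  refine csInf_le ⟨0, fun l hl => hl.1.le⟩ ⟨one_pos, by simpa using hx⟩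

lemma gam_nonneg {x : EuclideanSpace ℝ (Fin n)} (hx : x ∈ C) : 0 ≤ γ x := by
  rw [hγ]
  exact le_csInf ⟨1, one_pos, by simpa using hx⟩ fun l hl => hl.1.le

lemma norm_le_gam (hR : 0 < R) (hCR : C ⊆ closedBall a R)
    {x : EuclideanSpace ℝ (Fin n)} (hx : x ∈ C) : ‖x - a‖ ≤ R * γ x := by
  have h0 : ‖x - a‖ / R ≤ γ x := by
    rw [hγ]
    refine le_csInf ⟨1, one_pos, by simpa using hx⟩ ?_
    rintro l ⟨hl, hlC⟩
    have h1 : ‖l⁻¹ • (x - a)‖ ≤ R := by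
      have := mem_closedBall.1 (hCR hlC)
      rwa [dist_eq_norm, add_sub_cancel_left] at this
    rw [norm_smul, norm_inv, Real.norm_eq_abs, abs_of_pos hl] at h1
    rw [div_le_iff₀ hR]
    calc ‖x - a‖ = l * (l⁻¹ * ‖x - a‖) := by field_simp
    _ ≤ l * R := by nlinarith [norm_nonneg (x - a)]
  calc ‖x - a‖ = (‖x - a‖ / R) * R := by field_simp
  _ ≤ γ x * R := by nlinarith
  _ = R * γ x := mul_comm _ _

lemma gam_mem (hCcl : IsClosed C) (hR : 0 < R) (hCR : C ⊆ closedBall a R)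
    {x : EuclideanSpace ℝ (Fin n)} (hx : x ∈ C) (hxa : x ≠ a) :
    0 < γ x ∧ a + (γ x)⁻¹ • (x - a) ∈ C := by
  have hna : (0:ℝ) < ‖x - a‖ := by
    rw [norm_pos_iff]; exact sub_ne_zero_of_ne hxa
  have hpos : 0 < γ x := by
    have := norm_le_gam hγ hR hCR hx
    nlinarith
  refine ⟨hpos, ?_⟩
  show _ ∈ C
  set S := {l : ℝ | 0 < l ∧ a + l⁻¹ • (x - a) ∈ C} with hS
  set c := ‖x - a‖ / R with hc
  have hcpos : 0 < c := by positivity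
  have hSc : ∀ l ∈ S, c ≤ l := by
    rintro l ⟨hl, hlC⟩
    have h1 : ‖l⁻¹ • (x - a)‖ ≤ R := by
      have := mem_closedBall.1 (hCR hlC)
      rwa [dist_eq_norm, add_sub_cancel_left] at this
    rw [norm_smul, norm_inv, Real.norm_eq_abs, abs_of_pos hl] at h1
    rw [hc, div_le_iff₀ hR]
    calc ‖x - a‖ = l * (l⁻¹ * ‖x - a‖) := by field_simp
    _ ≤ l * R := by nlinarith
  have hSeq : S = Ici c ∩ (fun l : ℝ => a + l⁻¹ • (x - a)) ⁻¹' C := by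
    ext l
    constructor
    · intro hl; exact ⟨hSc l hl, hl.2⟩
    · rintro ⟨h1, h2⟩; exact ⟨hcpos.trans_le h1, h2⟩
  have hclosed : IsClosed S := by
    rw [hSeq]
    refine ContinuousOn.preimage_isClosed_of_isClosed ?_ isClosed_Ici hCcl
    refine continuousOn_const.add (ContinuousOn.smul (f := fun l : ℝ => l⁻¹) (g := fun _ => x - a) ?_ continuousOn_const)
    exact fun l hl => (continuousAt_inv₀ (ne_of_gt (hcpos.trans_le hl))).continuousWithinAt
  have hmem : γ x ∈ S := by
    rw [hγ, ← hS]
    exact hclosed.csInf_mem ⟨1, one_pos, by simpa using hx⟩ ⟨0, fun l hl => hl.1.le⟩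
  exact hmem.2

lemma gam_char (hconv : Convex ℝ C) (ha : a ∈ C) (hCcl : IsClosed C) (hR : 0 < R)
    (hCR : C ⊆ closedBall a R) {t : ℝ} (ht0 : 0 < t) (ht1 : t ≤ 1)
    (y : EuclideanSpace ℝ (Fin n)) :
    (a + t⁻¹ • (y - a) ∈ C) ↔ (y ∈ C ∧ γ y ≤ t) := by
  constructor
  · intro hp
    have hyC : y ∈ C := by
      have key : y = (1 - t) • a + t • (a + t⁻¹ • (y - a)) := by
        match_scalars <;> (field_simp; try ring)
      rw [key]
      exact hconv ha hp (by linarith) ht0.le (by ring)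
    refine ⟨hyC, ?_⟩
    rw [hγ]
    exact csInf_le ⟨0, fun l hl => hl.1.le⟩ ⟨ht0, hp⟩
  · rintro ⟨hyC, hgle⟩
    by_cases hya : y = a
    · subst hya; simpa using hyC
    · have hm := gam_mem hγ hCcl hR hCR hyC hya
      exact starshape_aux hconv ha hm.1 hgle hm.2

end aux

section aux2
variable {n : ℕ} {C : Set (EuclideanSpace ℝ (Fin n))} {a : EuclideanSpace ℝ (Fin n)}
  {u : EuclideanSpace ℝ (Fin n) → ℝ} {U : Set (EuclideanSpace ℝ (Fin n))}

lemma seg_mem_aux (hconv : Convex ℝ C) (ha : a ∈ C) {x : EuclideanSpace ℝ (Fin n)}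
    (hx : x ∈ C) {t : ℝ} (ht0 : 0 ≤ t) (ht1 : t ≤ 1) : a + t • (x - a) ∈ C := by
  have key : a + t • (x - a) = (1 - t) • a + t • x := by module
  rw [key]
  exact hconv ha hx (by linarith) ht0 (by ring)

lemma ftc_aux (hU : IsOpen U) (hCU : C ⊆ U) (hu : ContDiffOn ℝ 1 u U)
    (hconv : Convex ℝ C) (ha : a ∈ C) {x : EuclideanSpace ℝ (Fin n)} (hx : x ∈ C) :
    u a - u x = ∫ t in Ioc (0:ℝ) 1, (fderiv ℝ u (a + t • (x - a))) (a - x) := by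
  have hseg : ∀ t ∈ Icc (0:ℝ) 1, a + t • (x - a) ∈ U := fun t ht =>
    hCU (seg_mem_aux hconv ha hx ht.1 ht.2)
  have hline : ∀ t : ℝ, HasDerivAt (fun s : ℝ => a + s • (x - a)) (x - a) t := by
    intro t
    simpa using ((hasDerivAt_id t).smul_const (x - a)).const_add a
  have hderiv : ∀ t ∈ uIcc (0:ℝ) 1,
      HasDerivAt (fun s : ℝ => u (a + s • (x - a)))
        ((fderiv ℝ u (a + t • (x - a))) (x - a)) t := by
    intro t ht
    rw [uIcc_of_le zero_le_one] at ht
    have hdiff : DifferentiableAt ℝ u (a + t • (x - a)) :=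
      (hu.differentiableOn one_ne_zero).differentiableAt (hU.mem_nhds (hseg t ht))
    exact hdiff.hasFDerivAt.comp_hasDerivAt t (hline t)
  have hcont : ContinuousOn (fun t : ℝ => (fderiv ℝ u (a + t • (x - a))) (x - a))
      (uIcc (0:ℝ) 1) := by
    rw [uIcc_of_le zero_le_one]
    refine ContinuousOn.clm_apply ?_ continuousOn_const
    refine (hu.continuousOn_fderiv_of_isOpen hU le_rfl).comp ?_ hseg
    exact (continuous_const.add (continuous_id.smul continuous_const)).continuousOn
  have hint : IntervalIntegrable (fun t : ℝ => (fderiv ℝ u (a + t • (x - a))) (x - a))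
      volume 0 1 := hcont.intervalIntegrable
  have := intervalIntegral.integral_eq_sub_of_hasDerivAt hderiv hint
  simp only [one_smul, zero_smul, add_sub_cancel, add_zero] at this
  have heq : ∀ t : ℝ, (fderiv ℝ u (a + t • (x - a))) (a - x)
      = -((fderiv ℝ u (a + t • (x - a))) (x - a)) := by
    intro t
    rw [← map_neg]
    congr 1
    abel
  calc u a - u x = -(u x - u a) := by ring
  _ = -∫ t in (0:ℝ)..1, (fderiv ℝ u (a + t • (x - a))) (x - a) := by rw [this]
  _ = ∫ t in (0:ℝ)..1, (fderiv ℝ u (a + t • (x - a))) (a - x) := by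
      rw [← intervalIntegral.integral_neg]
      exact intervalIntegral.integral_congr fun t _ => (heq t).symm
  _ = ∫ t in Ioc (0:ℝ) 1, (fderiv ℝ u (a + t • (x - a))) (a - x) :=
      intervalIntegral.integral_of_le zero_le_one

end aux2

section aux3
variable {n : ℕ} {C : Set (EuclideanSpace ℝ (Fin n))} {a : EuclideanSpace ℝ (Fin n)}
  {u : EuclideanSpace ℝ (Fin n) → ℝ}

lemma cov_aux (hCmeas : MeasurableSet C) {t : ℝ} (ht0 : 0 < t) :
    ∫ x in C, (fderiv ℝ u (a + t • (x - a))) (a - x) ∂volume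
      = (t ^ (n + 1))⁻¹ * ∫ y in {y | a + t⁻¹ • (y - a) ∈ C},
          (fderiv ℝ u y) (a - y) ∂volume := by
  set φ : EuclideanSpace ℝ (Fin n) → ℝ := fun y => (fderiv ℝ u y) (a - y) with hφ
  set f₁ : EuclideanSpace ℝ (Fin n) → ℝ :=
    fun x => (fderiv ℝ u (a + t • (x - a))) (a - x) with hf₁
  set Dset : Set (EuclideanSpace ℝ (Fin n)) := {z | z + a ∈ C} with hDset
  set Et : Set (EuclideanSpace ℝ (Fin n)) := {y | a + t⁻¹ • (y - a) ∈ C} with hEt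
  have hEtmeas : MeasurableSet Et := by
    have : Continuous fun y : EuclideanSpace ℝ (Fin n) => a + t⁻¹ • (y - a) := by
      fun_prop
    exact this.measurable hCmeas
  set g : EuclideanSpace ℝ (Fin n) → ℝ :=
    fun z => Dset.indicator (fun z => (fderiv ℝ u (a + t • z)) (-z)) z with hg
  set h : EuclideanSpace ℝ (Fin n) → ℝ := fun w => g (t⁻¹ • w) with hh
  have step1 : ∫ x in C, f₁ x ∂volume = ∫ z, g z ∂volume := by
    rw [← integral_indicator hCmeas, ← integral_add_right_eq_self (C.indicator f₁) a]
    congr 1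
    funext z
    simp only [hg, hf₁]
    by_cases hz : z + a ∈ C
    · rw [Set.indicator_of_mem hz, Set.indicator_of_mem (show z ∈ Dset from hz)]
      have h1 : z + a - a = z := by abel
      have h2 : a - (z + a) = -z := by abel
      simp only [h1, h2]
    · rw [Set.indicator_of_notMem hz, Set.indicator_of_notMem (show z ∉ Dset from hz)]
  have step2 : ∫ z, g z ∂volume = |(t ^ n)⁻¹| • ∫ w, h w ∂volume := by
    have : ∀ z, g z = h (t • z) := by
      intro z
      simp only [hh, inv_smul_smul₀ ht0.ne']
    simp_rw [this]
    have := MeasureTheory.Measure.integral_comp_smul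
      (volume : Measure (EuclideanSpace ℝ (Fin n))) h t
    rwa [finrank_euclideanSpace_fin] at this
  have step3 : ∫ w, h w ∂volume
      = ∫ y, Et.indicator (fun y => t⁻¹ * φ y) y ∂volume := by
    rw [← integral_sub_right_eq_self h a]
    congr 1
    funext y
    simp only [hh, hg, hφ]
    have hmemiff : (t⁻¹ • (y - a) ∈ Dset) ↔ y ∈ Et := by
      simp only [hDset, hEt, mem_setOf_eq, add_comm]
    by_cases hy : y ∈ Et
    · rw [Set.indicator_of_mem (hmemiff.mpr hy), Set.indicator_of_mem hy]
      have h1 : a + t • (t⁻¹ • (y - a)) = y := by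
        rw [smul_smul, mul_inv_cancel₀ ht0.ne', one_smul]; abel
      have h2 : -(t⁻¹ • (y - a)) = t⁻¹ • (a - y) := by
        rw [← smul_neg, neg_sub]
      rw [h1, h2, ContinuousLinearMap.map_smul, smul_eq_mul]
    · rw [Set.indicator_of_notMem (fun hc => hy (hmemiff.mp hc)),
        Set.indicator_of_notMem hy]
  rw [step1, step2, step3, integral_indicator hEtmeas, integral_const_mul,
    smul_eq_mul, abs_of_pos (by positivity), pow_succ, mul_inv]
  ring
end aux3

section aux4
variable {n : ℕ} {C : Set (EuclideanSpace ℝ (Fin n))} {a : EuclideanSpace ℝ (Fin n)}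
  {u : EuclideanSpace ℝ (Fin n) → ℝ}

lemma phi_meas : Measurable fun y : EuclideanSpace ℝ (Fin n) => (fderiv ℝ u y) (a - y) := by
  have h1 : Measurable (fderiv ℝ u) := measurable_fderiv ℝ u
  have h2 : Measurable fun y : EuclideanSpace ℝ (Fin n) =>
      ((fderiv ℝ u y, a - y) : (EuclideanSpace ℝ (Fin n) →L[ℝ] ℝ) × EuclideanSpace ℝ (Fin n)) :=
    h1.prodMk (measurable_const.sub measurable_id)
  exact (isBoundedBilinearMap_apply.continuous.measurable).comp h2

lemma g_meas : Measurable fun p : EuclideanSpace ℝ (Fin n) × ℝ =>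
    (fderiv ℝ u (a + p.2 • (p.1 - a))) (a - p.1) := by
  have hψ : Measurable fun p : EuclideanSpace ℝ (Fin n) × ℝ => a + p.2 • (p.1 - a) :=
    (continuous_const.add (continuous_snd.smul (continuous_fst.sub continuous_const))).measurable
  have h1 : Measurable fun p : EuclideanSpace ℝ (Fin n) × ℝ =>
      ((fderiv ℝ u (a + p.2 • (p.1 - a)), a - p.1) :
        (EuclideanSpace ℝ (Fin n) →L[ℝ] ℝ) × EuclideanSpace ℝ (Fin n)) :=
    ((measurable_fderiv ℝ u).comp hψ).prodMk
      (measurable_const.sub measurable_fst)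
  exact (isBoundedBilinearMap_apply.continuous.measurable).comp h1

lemma vol_Et (hCmeas : MeasurableSet C) {t : ℝ} (ht0 : 0 < t) :
    volume {y | a + t⁻¹ • (y - a) ∈ C} = ENNReal.ofReal (t ^ n) * volume C := by
  have himg : {y | a + t⁻¹ • (y - a) ∈ C} = (AffineMap.homothety a t) '' C := by
    ext y
    simp only [mem_setOf_eq, mem_image, AffineMap.homothety_apply]
    constructor
    · intro hy
      refine ⟨a + t⁻¹ • (y - a), hy, ?_⟩
      simp only [vadd_eq_add, vsub_eq_sub]
      match_scalars <;> field_simp <;> ring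
    · rintro ⟨p, hp, rfl⟩
      have hid : a + t⁻¹ • ((t • (p -ᵥ a) +ᵥ a) - a) = p := by
        simp only [vadd_eq_add, vsub_eq_sub]
        match_scalars <;> field_simp <;> ring
      rwa [hid]
  rw [himg, Measure.addHaar_image_homothety, finrank_euclideanSpace_fin,
    abs_of_pos (by positivity)]

end aux4


open intervalIntegral in
lemma zpow_intinteg {g : ℝ} (hg : 0 < g) (hg1 : g ≤ 1) {n : ℕ} (hn : 1 ≤ n) :
    (∫ t in g..1, t ^ (-(n:ℤ)-1)) = ((g^n)⁻¹ - 1) / (n:ℝ) := by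
  rw [integral_zpow (Or.inr ⟨by omega, by
    rw [uIcc_of_le hg1]; intro hmem; exact absurd hmem.1 (not_le.mpr hg)⟩)]
  have hexp : (-(n:ℤ)-1+1) = -(n:ℤ) := by ring
  rw [hexp, one_zpow, zpow_neg, zpow_natCast]
  have : (n:ℝ) ≠ 0 := Nat.cast_ne_zero.mpr (by omega)
  push_cast
  field_simp
  rw [show (-(n:ℝ) - 1 + 1) = -(n:ℝ) by ring, div_neg, mul_div_assoc, div_self this]; ring

set_option maxHeartbeats 1000000 in
theorem sobolev_formula_convex
    (n : ℕ) (hn : 1 ≤ n) (C : Set (EuclideanSpace ℝ (Fin n)))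
    (hC : IsCompact C) (hconv : Convex ℝ C) (hint : (interior C).Nonempty)
    (a : EuclideanSpace ℝ (Fin n)) (ha : a ∈ C)
    (γ : EuclideanSpace ℝ (Fin n) → ℝ)
    (hγ : ∀ x, γ x = sInf {l : ℝ | 0 < l ∧ a + l⁻¹ • (x - a) ∈ C})
    (u : EuclideanSpace ℝ (Fin n) → ℝ) (U : Set (EuclideanSpace ℝ (Fin n)))
    (hU : IsOpen U) (hCU : C ⊆ U) (hu : ContDiffOn ℝ 1 u U) :
    u a - ⨍ x in C, u x
      = (1 / n) * ⨍ x in C, (fderiv ℝ u x) (a - x) * (1 / γ x ^ n - 1) := by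
  classical
  have hCcl : IsClosed C := hC.isClosed
  have hCmeas : MeasurableSet C := hCcl.measurableSet
  obtain ⟨R, hR0, hCR⟩ := hC.isBounded.subset_closedBall_lt 0 a
  haveI : Nontrivial (EuclideanSpace ℝ (Fin n)) :=
    Module.nontrivial_of_finrank_pos (R := ℝ)
      (by rw [finrank_euclideanSpace_fin]; omega)
  have hnne : (n : ℝ) ≠ 0 := Nat.cast_ne_zero.mpr (by omega)
  set φ : EuclideanSpace ℝ (Fin n) → ℝ := fun y => (fderiv ℝ u y) (a - y) with hφdef
  have hφm : Measurable φ := phi_meas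
  have hfdercont : ContinuousOn (fderiv ℝ u) U := hu.continuousOn_fderiv_of_isOpen hU le_rfl
  obtain ⟨M, hM⟩ := hC.exists_bound_of_continuousOn (hfdercont.mono hCU)
  have hM0 : 0 ≤ M := le_trans (norm_nonneg _) (hM a ha)
  have hφ_bound : ∀ y ∈ C, |φ y| ≤ M * ‖y - a‖ := by
    intro y hy
    calc |φ y| = ‖(fderiv ℝ u y) (a - y)‖ := rfl
    _ ≤ ‖fderiv ℝ u y‖ * ‖a - y‖ := ContinuousLinearMap.le_opNorm _ _
    _ ≤ M * ‖y - a‖ := by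
        rw [norm_sub_rev a y]
        exact mul_le_mul_of_nonneg_right (hM y hy) (norm_nonneg _)
  haveI hfinC : IsFiniteMeasure (volume.restrict C) :=
    ⟨by rw [Measure.restrict_apply_univ]; exact hC.measure_lt_top⟩
  haveI hfinI : IsFiniteMeasure (volume.restrict (Ioc (0:ℝ) 1)) :=
    ⟨by rw [Measure.restrict_apply_univ]; exact measure_Ioc_lt_top⟩
  -- the dilated sets
  set Et : ℝ → Set (EuclideanSpace ℝ (Fin n)) :=
    fun t => {y | a + t⁻¹ • (y - a) ∈ C} with hEtdef
  have hEt_meas : ∀ t : ℝ, MeasurableSet (Et t) := by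
    intro t
    have : Continuous fun y : EuclideanSpace ℝ (Fin n) => a + t⁻¹ • (y - a) := by
      fun_prop
    exact this.measurable hCmeas
  have hEt_char : ∀ t : ℝ, 0 < t → t ≤ 1 →
      ∀ y, y ∈ Et t ↔ y ∈ C ∧ γ y ≤ t := by
    intro t ht0 ht1 y
    exact gam_char hγ hconv ha hCcl hR0 hCR ht0 ht1 y
  have hEt_sub : ∀ t : ℝ, 0 < t → t ≤ 1 → Et t ⊆ C := by
    intro t ht0 ht1 y hy
    exact ((hEt_char t ht0 ht1 y).mp hy).1
  have hEt_vol : ∀ t : ℝ, 0 < t →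
      (volume (Et t)).toReal = t ^ n * (volume C).toReal := by
    intro t ht0
    simp only [hEtdef]
    rw [vol_Et hCmeas ht0, ENNReal.toReal_mul, ENNReal.toReal_ofReal (by positivity)]
  have hnormC : ∀ y ∈ C, ‖a - y‖ ≤ R := by
    intro y hy
    rw [norm_sub_rev]
    exact mem_closedBall.mp (hCR hy)
  -- bound of φ on Et t
  have hφEt : ∀ t : ℝ, 0 < t → t ≤ 1 → ∀ y ∈ Et t, |φ y| ≤ M * R * t := by
    intro t ht0 ht1 y hy
    obtain ⟨hyC, hgle⟩ := (hEt_char t ht0 ht1 y).mp hy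
    have h1 := hφ_bound y hyC
    have h2 := norm_le_gam hγ hR0 hCR hyC
    have h3 : 0 ≤ γ y := gam_nonneg hγ hyC
    nlinarith [mul_le_mul_of_nonneg_left h2 hM0,
      mul_le_mul_of_nonneg_left hgle (mul_nonneg hM0 hR0.le)]
  -- the region under the graph of γ
  set T : Set (EuclideanSpace ℝ (Fin n) × ℝ) :=
    {p | p.2 ∈ Ioc (0:ℝ) 1 ∧ p.1 ∈ Et p.2} with hTdef
  have hT_meas : MeasurableSet T := by
    have hunion : T = ⋃ k : ℕ, {p : EuclideanSpace ℝ (Fin n) × ℝ |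
        p.2 ∈ Icc (1/(k+1) : ℝ) 1 ∧ a + (p.2)⁻¹ • (p.1 - a) ∈ C} := by
      ext p
      simp only [hTdef, mem_setOf_eq, mem_iUnion, mem_Ioc, mem_Icc, hEtdef]
      constructor
      · rintro ⟨⟨h0, h1⟩, hE⟩
        obtain ⟨k, hk⟩ := exists_nat_one_div_lt h0
        exact ⟨k, ⟨hk.le, h1⟩, hE⟩
      · rintro ⟨k, ⟨hc, h1⟩, hE⟩
        have : (0:ℝ) < 1/(k+1) := by positivity
        exact ⟨⟨this.trans_le hc, h1⟩, hE⟩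
    rw [hunion]
    refine MeasurableSet.iUnion fun k => ?_
    have hc : (0:ℝ) < 1/(k+1) := by positivity
    have hclosed : IsClosed {p : EuclideanSpace ℝ (Fin n) × ℝ |
        p.2 ∈ Icc (1/(k+1) : ℝ) 1 ∧ a + (p.2)⁻¹ • (p.1 - a) ∈ C} := by
      have heq : {p : EuclideanSpace ℝ (Fin n) × ℝ |
          p.2 ∈ Icc (1/(k+1) : ℝ) 1 ∧ a + (p.2)⁻¹ • (p.1 - a) ∈ C}
          = (univ ×ˢ Icc (1/(k+1) : ℝ) 1) ∩
            (fun p : EuclideanSpace ℝ (Fin n) × ℝ => a + (p.2)⁻¹ • (p.1 - a)) ⁻¹' C := by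
        ext p
        simp only [mem_setOf_eq, mem_inter_iff, mem_prod, mem_univ, true_and, mem_preimage]
      rw [heq]
      refine ContinuousOn.preimage_isClosed_of_isClosed ?_
        (isClosed_univ.prod isClosed_Icc) hCcl
      intro p hp
      have hp2 : p.2 ≠ 0 := ne_of_gt (hc.trans_le hp.2.1)
      exact (continuousAt_const.add ((continuousAt_snd.inv₀ hp2).smul
        (continuousAt_fst.sub continuousAt_const))).continuousWithinAt
    exact hclosed.measurableSet
  -- the kernel
  set Ψ : EuclideanSpace ℝ (Fin n) × ℝ → ℝ :=
    fun p => T.indicator (fun p => φ p.1 * (p.2 ^ (n+1))⁻¹) p with hΨdef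
  have hΨm : Measurable Ψ := by
    refine Measurable.indicator ?_ hT_meas
    exact (hφm.comp measurable_fst).mul ((measurable_snd.pow_const (n+1)).inv)
  have hΨm2 : ∀ t : ℝ, t ∈ Ioc (0:ℝ) 1 → ∀ y,
      Ψ (y, t) = (Et t).indicator (fun y => φ y * (t ^ (n+1))⁻¹) y := by
    intro t ht y
    by_cases hy : y ∈ Et t
    · simp only [hΨdef]
      rw [Set.indicator_of_mem (show ((y,t) : EuclideanSpace ℝ (Fin n) × ℝ) ∈ T from ⟨ht, hy⟩),
        Set.indicator_of_mem hy]
    · simp only [hΨdef]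
      rw [Set.indicator_of_notMem (fun hT => hy hT.2), Set.indicator_of_notMem hy]
  -- integrability of the kernel
  have hΨint : Integrable Ψ ((volume.restrict C).prod (volume.restrict (Ioc (0:ℝ) 1))) := by
    refine (integrable_prod_iff' hΨm.aestronglyMeasurable).mpr ⟨?_, ?_⟩
    · filter_upwards [ae_restrict_mem measurableSet_Ioc] with t ht
      refine Integrable.mono' (integrable_const (M * R * t * (t ^ (n+1))⁻¹)) ?_ ?_
      · exact (hΨm.comp (measurable_id.prodMk measurable_const)).aestronglyMeasurable
      · filter_upwards with y
        rw [hΨm2 t ht y]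
        by_cases hy : y ∈ Et t
        · rw [Set.indicator_of_mem hy, Real.norm_eq_abs, abs_mul,
            abs_of_nonneg (inv_nonneg.mpr (pow_nonneg ht.1.le _) : (0:ℝ) ≤ (t ^ (n+1))⁻¹)]
          have := hφEt t ht.1 ht.2 y hy
          have h2 : (0:ℝ) ≤ (t ^ (n+1))⁻¹ := inv_nonneg.mpr (pow_nonneg ht.1.le _)
          nlinarith
        · rw [Set.indicator_of_notMem hy]
          simp only [norm_zero]
          exact mul_nonneg (mul_nonneg (mul_nonneg hM0 hR0.le) ht.1.le)
            (inv_nonneg.mpr (pow_nonneg ht.1.le _))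
    · refine Integrable.mono' (integrable_const (M * R * (volume C).toReal)) ?_ ?_
      · exact ((hΨm.norm.stronglyMeasurable).integral_prod_left').aestronglyMeasurable
      · filter_upwards [ae_restrict_mem measurableSet_Ioc] with t ht
        have hcalc : ∫ y, ‖Ψ (y, t)‖ ∂(volume.restrict C)
            = ∫ y in Et t, ‖φ y * (t ^ (n+1))⁻¹‖ ∂volume := by
          have h1 : ∀ y, ‖Ψ (y, t)‖
              = (Et t).indicator (fun y => ‖φ y * (t ^ (n+1))⁻¹‖) y := by
            intro y
            rw [hΨm2 t ht y]
            by_cases hy : y ∈ Et t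
            · rw [Set.indicator_of_mem hy, Set.indicator_of_mem hy]
            · rw [Set.indicator_of_notMem hy, Set.indicator_of_notMem hy, norm_zero]
          simp_rw [h1]
          rw [integral_indicator (hEt_meas t), Measure.restrict_restrict (hEt_meas t),
            inter_eq_self_of_subset_left (hEt_sub t ht.1 ht.2)]
        have hbd : ‖∫ y in Et t, ‖φ y * (t ^ (n+1))⁻¹‖ ∂volume‖
            ≤ (M * R * t * (t ^ (n+1))⁻¹) * (volume (Et t)).toReal := by
          refine norm_setIntegral_le_of_norm_le_const ?_ ?_
          · exact lt_of_le_of_lt (measure_mono (hEt_sub t ht.1 ht.2)) hC.measure_lt_top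
          · intro y hy
            rw [norm_norm, Real.norm_eq_abs, abs_mul,
              abs_of_nonneg (inv_nonneg.mpr (pow_nonneg ht.1.le _) : (0:ℝ) ≤ (t ^ (n+1))⁻¹)]
            have := hφEt t ht.1 ht.2 y hy
            have h2 : (0:ℝ) ≤ (t ^ (n+1))⁻¹ := inv_nonneg.mpr (pow_nonneg ht.1.le _)
            nlinarith
        rw [Real.norm_eq_abs, hcalc]
        rw [abs_of_nonneg (integral_nonneg (fun y => norm_nonneg _))]
        refine le_trans (le_trans (le_abs_self _) hbd) ?_
        rw [hEt_vol t ht.1]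
        have halg : M * R * t * (t ^ (n+1))⁻¹ * (t ^ n * (volume C).toReal)
            = M * R * (volume C).toReal := by
          have ht0 : (0:ℝ) < t := ht.1
          field_simp [pow_succ]
          ring
        rw [halg]
  -- change of variables: identification of the inner y-integral
  have hAt : ∀ t ∈ Ioc (0:ℝ) 1,
      (∫ x in C, (fderiv ℝ u (a + t • (x - a))) (a - x) ∂volume)
        = ∫ y, Ψ (y, t) ∂(volume.restrict C) := by
    intro t ht
    have h1 : ∫ y, Ψ (y, t) ∂(volume.restrict C)
        = ∫ y in Et t, φ y * (t ^ (n+1))⁻¹ ∂volume := by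
      simp_rw [hΨm2 t ht]
      rw [integral_indicator (hEt_meas t), Measure.restrict_restrict (hEt_meas t),
        inter_eq_self_of_subset_left (hEt_sub t ht.1 ht.2)]
    rw [h1, cov_aux hCmeas ht.1, integral_mul_const]
    simp only [hEtdef]
    ring
  -- Fubini for the FTC double integral
  have hphase1 : ∫ x in C, (u a - u x) ∂volume
      = ∫ t in Ioc (0:ℝ) 1,
          (∫ x in C, (fderiv ℝ u (a + t • (x - a))) (a - x) ∂volume) ∂volume := by
    have hx_eq : ∀ x ∈ C, u a - u x
        = ∫ t in Ioc (0:ℝ) 1, (fderiv ℝ u (a + t • (x - a))) (a - x) ∂volume :=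
      fun x hx => ftc_aux hU hCU hu hconv ha hx
    rw [setIntegral_congr_fun hCmeas (fun x hx => hx_eq x hx)]
    refine integral_integral_swap ?_
    refine Integrable.mono' (integrable_const (M * R)) ?_ ?_
    · exact g_meas.aestronglyMeasurable
    · rw [Measure.prod_restrict]
      filter_upwards [ae_restrict_mem (hCmeas.prod measurableSet_Ioc)] with p hp
      obtain ⟨hp1, hp2⟩ := hp
      have hmem : a + p.2 • (p.1 - a) ∈ C :=
        seg_mem_aux hconv ha hp1 hp2.1.le hp2.2
      calc ‖(fderiv ℝ u (a + p.2 • (p.1 - a))) (a - p.1)‖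
          ≤ ‖fderiv ℝ u (a + p.2 • (p.1 - a))‖ * ‖a - p.1‖ :=
            ContinuousLinearMap.le_opNorm _ _
        _ ≤ M * R := by
            have h1 := hM _ hmem
            have h2 := hnormC p.1 hp1
            have h3 := norm_nonneg (a - p.1)
            nlinarith [norm_nonneg (fderiv ℝ u (a + p.2 • (p.1 - a)))]
  -- inner t-integral
  have hzpow : ∀ t : ℝ, (t ^ (n+1))⁻¹ = t ^ (-(n:ℤ)-1) := by
    intro t
    rw [show (-(n:ℤ)-1) = -((n+1 : ℕ) : ℤ) by push_cast; ring, zpow_neg, zpow_natCast]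
  have hinner : ∀ᵐ y ∂(volume.restrict C),
      (∫ t, Ψ (y, t) ∂(volume.restrict (Ioc (0:ℝ) 1)))
        = (n:ℝ)⁻¹ * (φ y * (1 / γ y ^ n - 1)) := by
    have hne_a : ∀ᵐ y : EuclideanSpace ℝ (Fin n) ∂volume, y ≠ a := by
      haveI : NullSingletonClass (volume : Measure (EuclideanSpace ℝ (Fin n))) := by infer_instance
      rw [ae_iff]
      simp only [ne_eq, not_not, setOf_eq_eq_singleton]
      exact measure_singleton a
    filter_upwards [ae_restrict_mem hCmeas, ae_restrict_of_ae hne_a] with y hyC hya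
    have hg0 : 0 < γ y := (gam_mem hγ hCcl hR0 hCR hyC hya).1
    have hg1 : γ y ≤ 1 := gam_le_one hγ hyC
    have h1 : ∫ t, Ψ (y, t) ∂(volume.restrict (Ioc (0:ℝ) 1))
        = ∫ t, (Ici (γ y)).indicator (fun t => φ y * (t ^ (n+1))⁻¹) t
            ∂(volume.restrict (Ioc (0:ℝ) 1)) := by
      refine integral_congr_ae ?_
      filter_upwards [ae_restrict_mem measurableSet_Ioc] with t ht
      rw [hΨm2 t ht y]
      by_cases hgt : γ y ≤ t
      · rw [Set.indicator_of_mem ((hEt_char t ht.1 ht.2 y).mpr ⟨hyC, hgt⟩),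
          Set.indicator_of_mem (mem_Ici.mpr hgt)]
      · rw [Set.indicator_of_notMem
          (fun hy => hgt ((hEt_char t ht.1 ht.2 y).mp hy).2),
          Set.indicator_of_notMem (fun hmem => hgt (mem_Ici.mp hmem))]
    have hIcc : Ici (γ y) ∩ Ioc (0:ℝ) 1 = Icc (γ y) 1 := by
      ext s
      simp only [mem_inter_iff, mem_Ici, mem_Ioc, mem_Icc]
      constructor
      · rintro ⟨ha1, _, ha3⟩; exact ⟨ha1, ha3⟩
      · rintro ⟨ha1, ha2⟩; exact ⟨ha1, hg0.trans_le ha1, ha2⟩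
    rw [h1, integral_indicator measurableSet_Ici,
      Measure.restrict_restrict measurableSet_Ici, hIcc,
      integral_Icc_eq_integral_Ioc, ← intervalIntegral.integral_of_le hg1]
    rw [intervalIntegral.integral_const_mul]
    have h2 : (∫ t in (γ y)..1, (t ^ (n+1))⁻¹)
        = ((γ y) ^ n)⁻¹ / n - 1 / n := by
      have h0not : (0:ℝ) ∉ uIcc (γ y) 1 := by
        rw [uIcc_of_le hg1]
        intro hmem
        exact absurd hmem.1 (not_le.mpr hg0)
      have hrw : (fun t : ℝ => (t ^ (n+1))⁻¹) = fun t : ℝ => t ^ (-(n:ℤ)-1) :=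
        funext fun t => hzpow t
      rw [hrw, zpow_intinteg hg0 hg1 hn]
      field_simp
    rw [h2]
    ring
  -- the key identity
  have hkey : ∫ x in C, (u a - u x) ∂volume
      = (n:ℝ)⁻¹ * ∫ x in C, φ x * (1 / γ x ^ n - 1) ∂volume := by
    rw [hphase1]
    have hstep : ∫ t in Ioc (0:ℝ) 1,
        (∫ x in C, (fderiv ℝ u (a + t • (x - a))) (a - x) ∂volume) ∂volume
        = ∫ t, (∫ y, Ψ (y, t) ∂(volume.restrict C)) ∂(volume.restrict (Ioc (0:ℝ) 1)) := by
      refine integral_congr_ae ?_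
      filter_upwards [ae_restrict_mem measurableSet_Ioc] with t ht
      exact hAt t ht
    calc ∫ t in Ioc (0:ℝ) 1,
        (∫ x in C, (fderiv ℝ u (a + t • (x - a))) (a - x) ∂volume) ∂volume
        = ∫ t, (∫ y, Ψ (y, t) ∂(volume.restrict C)) ∂(volume.restrict (Ioc (0:ℝ) 1)) :=
          hstep
      _ = ∫ y, (∫ t, Ψ (y, t) ∂(volume.restrict (Ioc (0:ℝ) 1))) ∂(volume.restrict C) :=
          (integral_integral_swap (f := fun y t => Ψ (y, t)) hΨint).symm
      _ = ∫ y, ((n:ℝ)⁻¹ * (φ y * (1 / γ y ^ n - 1))) ∂(volume.restrict C) :=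
          integral_congr_ae hinner
      _ = (n:ℝ)⁻¹ * ∫ x in C, φ x * (1 / γ x ^ n - 1) ∂volume :=
          integral_const_mul _ _
  -- conclusion
  have hvol_pos : 0 < (volume C).toReal := by
    refine ENNReal.toReal_pos ?_ hC.measure_lt_top.ne
    refine ne_of_gt (lt_of_lt_of_le ?_ (measure_mono interior_subset))
    exact isOpen_interior.measure_pos volume hint
  have huint : IntegrableOn u C volume :=
    ((hu.continuousOn).mono hCU).integrableOn_compact hC
  have hsplit : ∫ x in C, (u a - u x) ∂volume
      = (volume C).toReal * u a - ∫ x in C, u x ∂volume := by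
    rw [integral_sub (integrableOn_const (C := u a) hC.measure_lt_top.ne) huint,
      setIntegral_const, smul_eq_mul]; rfl
  rw [setAverage_eq, setAverage_eq, smul_eq_mul, smul_eq_mul]
  have hkey2 : (volume C).toReal * u a - ∫ x in C, u x ∂volume
      = (n:ℝ)⁻¹ * ∫ x in C, φ x * (1 / γ x ^ n - 1) ∂volume := by
    rw [← hsplit, hkey]
  calc u a - (volume C).toReal⁻¹ * ∫ x in C, u x ∂volume
      = (volume C).toReal⁻¹ * ((volume C).toReal * u a - ∫ x in C, u x ∂volume) := by
        rw [mul_sub, inv_mul_cancel_left₀ hvol_pos.ne']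
    _ = (volume C).toReal⁻¹ * ((n:ℝ)⁻¹ * ∫ x in C, φ x * (1 / γ x ^ n - 1) ∂volume) := by
        rw [hkey2]
    _ = (1 / n) * ((volume C).toReal⁻¹ * ∫ x in C, φ x * (1 / γ x ^ n - 1) ∂volume) := by
        ring
end

section
/- Let S ⊆ ℝⁿ be a nondegenerate n-simplex with vertices a_0,…,a_n and barycentric coordinate functions β_0,…,β_n. For each i and each x ∈ S, the Minkowski gauge of S centered at a_i satisfies γ^S_{a_i}(x) = 1 − β_i(x). -/
open Set

theorem gauge_eq_one_sub_barycentric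
    (n : ℕ) (a : Fin (n + 1) → EuclideanSpace ℝ (Fin n))
    (hind : AffineIndependent ℝ a)
    (S : Set (EuclideanSpace ℝ (Fin n))) (hS : S = convexHull ℝ (Set.range a))
    (β : Fin (n + 1) → EuclideanSpace ℝ (Fin n) → ℝ)
    (hβ1 : ∀ x, ∑ i, β i x = 1)
    (hβ2 : ∀ x, ∑ i, β i x • a i = x)
    (γ : Fin (n + 1) → EuclideanSpace ℝ (Fin n) → ℝ)
    (hγ : ∀ i x, γ i x = sInf {l : ℝ | 0 < l ∧ a i + l⁻¹ • (x - a i) ∈ S}) :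
    ∀ i, ∀ x ∈ S, γ i x = 1 - β i x := by
  have huniq : ∀ (y : EuclideanSpace ℝ (Fin n)) (w : Fin (n+1) → ℝ),
      (∑ j, w j) = 1 → (∑ j, w j • a j) = y → w = fun j => β j y := by
    intro y w hw1 hw2
    rw [affineIndependent_iff_eq_of_fintype_affineCombination_eq] at hind
    apply hind _ _ hw1 (hβ1 y)
    rw [Finset.affineCombination_eq_linear_combination _ _ _ hw1,
        Finset.affineCombination_eq_linear_combination _ _ _ (hβ1 y), hw2, hβ2]
  -- nonnegativity of barycentric coordinates on S
  have hmem : ∀ (y : EuclideanSpace ℝ (Fin n)),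
      y ∈ S ↔ ∀ j, 0 ≤ β j y := by
    intro y
    constructor
    · intro hy
      rw [hS, convexHull_range_eq_exists_affineCombination] at hy
      obtain ⟨s, w, hw0, hw1, hwy⟩ := hy
      set w' : Fin (n+1) → ℝ := fun j => if j ∈ s then w j else 0 with hw'
      have hsum : ∑ j, w' j = 1 := by
        rw [Finset.sum_ite_mem, Finset.univ_inter, hw1]
      have hcomb : ∑ j, w' j • a j = y := by
        rw [← hwy, Finset.affineCombination_eq_linear_combination _ _ _ hw1]
        rw [show (fun j => w' j • a j) = fun j => if j ∈ s then w j • a j else 0 by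
          funext j; by_cases h : j ∈ s <;> simp [w', h]]
        rw [Finset.sum_ite_mem, Finset.univ_inter]
      have := huniq y w' hsum hcomb
      intro j
      rw [← congrFun this j]
      by_cases h : j ∈ s
      · simpa [w', h] using hw0 j h
      · simp [w', h]
    · intro h
      rw [hS]
      have : Finset.univ.affineCombination ℝ a (fun j => β j y) ∈ convexHull ℝ (Set.range a) :=
        affineCombination_mem_convexHull (fun j (_ : j ∈ Finset.univ) => h j) (hβ1 y)
      rwa [Finset.affineCombination_eq_linear_combination _ _ _ (hβ1 y), hβ2] at this
  intro i x hx
  have hβx : ∀ j, 0 ≤ β j x := (hmem x).mp hx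
  set t : ℝ := 1 - β i x with ht
  have hβle : β i x ≤ 1 := by
    have : ∑ j ∈ {i}, β j x ≤ ∑ j, β j x :=
      Finset.sum_le_sum_of_subset_of_nonneg (Finset.subset_univ _)
        (fun j _ _ => hβx j)
    simpa [hβ1 x] using this
  have ht0 : 0 ≤ t := by simp [ht]; linarith
  -- key: membership characterization
  have hset : {l : ℝ | 0 < l ∧ a i + l⁻¹ • (x - a i) ∈ S} = {l : ℝ | 0 < l ∧ t ≤ l} := by
    ext l
    simp only [mem_setOf_eq]
    constructor
    · rintro ⟨hl, hmem'⟩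
      refine ⟨hl, ?_⟩
      set y := a i + l⁻¹ • (x - a i) with hy
      set w' : Fin (n+1) → ℝ := fun j => if j = i then 1 - l⁻¹ * t else l⁻¹ * β j x with hw'
      have hsumβ : ∑ j ∈ Finset.univ.erase i, β j x = t := by
        rw [ht, eq_sub_iff_add_eq, ← hβ1 x]
        exact Finset.sum_erase_add Finset.univ (fun j => β j x) (Finset.mem_univ i)
      have hsum : ∑ j, w' j = 1 := by
        rw [← Finset.sum_erase_add Finset.univ w' (Finset.mem_univ i)]
        have h1 : ∑ j ∈ Finset.univ.erase i, w' j = l⁻¹ * t := by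
          rw [show ∑ j ∈ Finset.univ.erase i, w' j
              = ∑ j ∈ Finset.univ.erase i, l⁻¹ * β j x by
            apply Finset.sum_congr rfl
            intro j hj
            simp [w', Finset.ne_of_mem_erase hj]]
          rw [← Finset.mul_sum, hsumβ]
        rw [h1]
        simp [w']
      have hcomb : ∑ j, w' j • a j = y := by
        rw [← Finset.sum_erase_add Finset.univ (fun j => w' j • a j) (Finset.mem_univ i)]
        have h1 : ∑ j ∈ Finset.univ.erase i, w' j • a j
            = l⁻¹ • (x - β i x • a i) := by
          rw [show ∑ j ∈ Finset.univ.erase i, w' j • a j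
              = ∑ j ∈ Finset.univ.erase i, l⁻¹ • (β j x • a j) by
            apply Finset.sum_congr rfl
            intro j hj
            simp [w', Finset.ne_of_mem_erase hj, mul_smul]]
          rw [← Finset.smul_sum]
          congr 1
          have := Finset.sum_erase_add Finset.univ (fun j => β j x • a j) (Finset.mem_univ i)
          rw [hβ2 x] at this
          rw [eq_sub_iff_add_eq, this]
        rw [h1]
        simp only [w', if_pos rfl]
        rw [hy]
        rw [sub_smul, one_smul, smul_sub, smul_sub]
        have : l⁻¹ * t = l⁻¹ * 1 - l⁻¹ * β i x := by ring
        rw [this, sub_smul, mul_smul, mul_smul, one_smul]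
        module
      have := huniq y w' hsum hcomb
      have hwi : w' i = β i y := congrFun this i
      have hβyi : 0 ≤ β i y := (hmem y).mp hmem' i
      rw [← hwi] at hβyi
      simp only [w', if_pos rfl] at hβyi
      -- 0 ≤ 1 - l⁻¹ * t
      rw [sub_nonneg] at hβyi
      have : l⁻¹ * t * l ≤ 1 * l := by
        apply mul_le_mul_of_nonneg_right hβyi hl.le
      rwa [one_mul, mul_comm l⁻¹ t, mul_assoc, inv_mul_cancel₀ hl.ne', mul_one] at this
    · rintro ⟨hl, htl⟩
      refine ⟨hl, ?_⟩
      rw [hmem]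
      set y := a i + l⁻¹ • (x - a i) with hy
      set w' : Fin (n+1) → ℝ := fun j => if j = i then 1 - l⁻¹ * t else l⁻¹ * β j x with hw'
      have hsumβ : ∑ j ∈ Finset.univ.erase i, β j x = t := by
        rw [ht, eq_sub_iff_add_eq, ← hβ1 x]
        exact Finset.sum_erase_add Finset.univ (fun j => β j x) (Finset.mem_univ i)
      have hsum : ∑ j, w' j = 1 := by
        rw [← Finset.sum_erase_add Finset.univ w' (Finset.mem_univ i)]
        have h1 : ∑ j ∈ Finset.univ.erase i, w' j = l⁻¹ * t := by
          rw [show ∑ j ∈ Finset.univ.erase i, w' j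
              = ∑ j ∈ Finset.univ.erase i, l⁻¹ * β j x by
            apply Finset.sum_congr rfl
            intro j hj
            simp [w', Finset.ne_of_mem_erase hj]]
          rw [← Finset.mul_sum, hsumβ]
        rw [h1]
        simp [w']
      have hcomb : ∑ j, w' j • a j = y := by
        rw [← Finset.sum_erase_add Finset.univ (fun j => w' j • a j) (Finset.mem_univ i)]
        have h1 : ∑ j ∈ Finset.univ.erase i, w' j • a j
            = l⁻¹ • (x - β i x • a i) := by
          rw [show ∑ j ∈ Finset.univ.erase i, w' j • a j
              = ∑ j ∈ Finset.univ.erase i, l⁻¹ • (β j x • a j) by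
            apply Finset.sum_congr rfl
            intro j hj
            simp [w', Finset.ne_of_mem_erase hj, mul_smul]]
          rw [← Finset.smul_sum]
          congr 1
          have := Finset.sum_erase_add Finset.univ (fun j => β j x • a j) (Finset.mem_univ i)
          rw [hβ2 x] at this
          rw [eq_sub_iff_add_eq, this]
        rw [h1]
        simp only [w', if_pos rfl]
        rw [hy]
        rw [sub_smul, one_smul, smul_sub, smul_sub]
        have : l⁻¹ * t = l⁻¹ * 1 - l⁻¹ * β i x := by ring
        rw [this, sub_smul, mul_smul, mul_smul, one_smul]
        module
      have hw'0 : ∀ j, 0 ≤ w' j := by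
        intro j
        by_cases h : j = i
        · simp only [w', if_pos h]
          rw [sub_nonneg]
          calc l⁻¹ * t ≤ l⁻¹ * l := mul_le_mul_of_nonneg_left htl (by positivity)
            _ = 1 := inv_mul_cancel₀ hl.ne'
        · simp only [w', if_neg h]
          exact mul_nonneg (by positivity) (hβx j)
      intro j
      rw [← congrFun (huniq y w' hsum hcomb) j]
      exact hw'0 j
  rw [hγ, hset]
  rcases eq_or_lt_of_le ht0 with h0 | h0
  · rw [show {l : ℝ | 0 < l ∧ t ≤ l} = Ioi 0 by ext l; simp [← h0]; intro h; linarith]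
    rw [csInf_Ioi, ← h0]
  · rw [show {l : ℝ | 0 < l ∧ t ≤ l} = Ici t by ext l; simp; intro h; linarith]
    rw [csInf_Ici]
end

section
/- Let S ⊆ ℝⁿ be a nondegenerate n-simplex of diameter at most d with vertices a_0,…,a_n, and let β_i be the barycentric coordinates. There exists a constant c > 0 depending only on S such that for every x in the interior of S and every i, 1 − β_i(x) ≥ c·|x − a_i|/d. -/
open Set Metric

theorem one_sub_barycentric_lower_bound
    (n : ℕ) (a : Fin (n + 1) → EuclideanSpace ℝ (Fin n))
    (hind : AffineIndependent ℝ a)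
    (S : Set (EuclideanSpace ℝ (Fin n))) (hS : S = convexHull ℝ (Set.range a))
    (d : ℝ) (hd : 0 < d) (hdiam : Metric.diam S ≤ d)
    (β : Fin (n + 1) → EuclideanSpace ℝ (Fin n) → ℝ)
    (hβ1 : ∀ x, ∑ i, β i x = 1)
    (hβ2 : ∀ x, ∑ i, β i x • a i = x) :
    ∃ c > (0 : ℝ), ∀ x ∈ interior S, ∀ i,
      1 - β i x ≥ c * ‖x - a i‖ / d := by
  refine ⟨1, one_pos, ?_⟩
  intro x hx i
  have hxS : x ∈ S := interior_subset hx
  rw [hS, convexHull_range_eq_exists_affineCombination] at hxS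
  obtain ⟨s, w, hw0, hw1, hwx⟩ := hxS
  set w' : Fin (n + 1) → ℝ := (s : Set (Fin (n + 1))).indicator w with hw'
  have hw'0 : ∀ j, 0 ≤ w' j := by
    intro j
    by_cases hj : j ∈ s
    · simpa [hw', Set.indicator_of_mem (Finset.mem_coe.2 hj)] using hw0 j hj
    · rw [hw', Set.indicator_of_notMem (by simpa using hj)]
  have hw'1 : ∑ j, w' j = 1 := by
    rw [hw']
    rw [← Finset.sum_indicator_subset w (Finset.subset_univ s)] at hw1
    exact hw1
  have hwx' : Finset.univ.affineCombination ℝ a w' = x := by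
    rw [hw', ← Finset.affineCombination_indicator_subset w a (Finset.subset_univ s)]
    exact hwx
  -- uniqueness of barycentric coordinates
  have huniq := (affineIndependent_iff_eq_of_fintype_affineCombination_eq ℝ a).1 hind
    (fun j => β j x) w' (hβ1 x) hw'1
  have h2 : ∑ j, w' j • a j = x := by
    rw [← Finset.affineCombination_eq_linear_combination _ _ _ hw'1]
    exact hwx'
  have hβeq : (fun j => β j x) = w' := by
    apply huniq
    rw [Finset.affineCombination_eq_linear_combination _ _ _ (hβ1 x),
      Finset.affineCombination_eq_linear_combination _ _ _ hw'1, hβ2 x, h2]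
  have hβ0 : ∀ j, 0 ≤ β j x := fun j => by rw [show β j x = w' j from congrFun hβeq j]; exact hw'0 j
  -- bounded
  have hbdd : Bornology.IsBounded S := by
    rw [hS]
    exact isBounded_convexHull.2 ((Set.finite_range a).isBounded)
  have haS : ∀ j, a j ∈ S := fun j => hS ▸ subset_convexHull ℝ _ (Set.mem_range_self j)
  have hdist : ∀ j, ‖a j - a i‖ ≤ d := fun j => by
    rw [← dist_eq_norm]
    exact (dist_le_diam_of_mem hbdd (haS j) (haS i)).trans hdiam
  -- key identity
  have hkey : x - a i = ∑ j, β j x • (a j - a i) := by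
    have : ∑ j, β j x • (a j - a i) = (∑ j, β j x • a j) - (∑ j, β j x) • a i := by
      simp [smul_sub, Finset.sum_sub_distrib, Finset.sum_smul]
    rw [this, hβ1 x, hβ2 x, one_smul]
  have hnorm : ‖x - a i‖ ≤ (1 - β i x) * d := by
    rw [hkey]
    calc ‖∑ j, β j x • (a j - a i)‖ ≤ ∑ j, ‖β j x • (a j - a i)‖ := norm_sum_le _ _
      _ = ∑ j, β j x * ‖a j - a i‖ := by
          refine Finset.sum_congr rfl fun j _ => ?_
          rw [norm_smul, Real.norm_of_nonneg (hβ0 j)]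
      _ = ∑ j ∈ Finset.univ.erase i, β j x * ‖a j - a i‖ := by
          have hzero : β i x * ‖a i - a i‖ = 0 := by simp
          exact (Finset.sum_erase (f := fun j => β j x * ‖a j - a i‖) Finset.univ hzero).symm
      _ ≤ ∑ j ∈ Finset.univ.erase i, β j x * d := by
          refine Finset.sum_le_sum fun j _ => ?_
          exact mul_le_mul_of_nonneg_left (hdist j) (hβ0 j)
      _ = (1 - β i x) * d := by
          rw [← Finset.sum_mul]
          congr 1
          have := Finset.sum_erase_add Finset.univ (fun j => β j x) (Finset.mem_univ i)
          rw [← hβ1 x]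
          linarith [this]
  rw [ge_iff_le, one_mul, div_le_iff₀ hd]
  exact hnorm
end

section
/- Let ε > 0 and u ∈ W^{1,p}(ℝ) for some p ∈ [1,∞), with u everywhere defined and absolutely continuous. Then there exists r > 0 and h ∈ ℝ such that the piecewise affine interpolant v of u on the uniform grid {h + kr : k ∈ ℤ} satisfies ∫_ℝ |u′ − v′|^p ≤ ε. -/
open MeasureTheory Set ENNReal

namespace ApproxDimOne

lemma mem_cell_iff {r : ℝ} (hr : 0 < r) {k : ℤ} {x : ℝ} :
    x ∈ Ico ((k : ℝ) * r) (((k : ℝ) + 1) * r) ↔ ⌊x / r⌋ = k := by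
  rw [Int.floor_eq_iff, mem_Ico]
  constructor
  · rintro ⟨h1, h2⟩
    exact ⟨(le_div_iff₀ hr).2 (by linarith), by rw [div_lt_iff₀ hr]; push_cast; linarith⟩
  · rintro ⟨h1, h2⟩
    refine ⟨(le_div_iff₀ hr).1 h1, ?_⟩
    rw [div_lt_iff₀ hr] at h2
    push_cast at h2
    linarith

lemma iUnion_cell {r : ℝ} (hr : 0 < r) :
    (⋃ k : ℤ, Ico ((k : ℝ) * r) (((k : ℝ) + 1) * r)) = univ :=
  eq_univ_of_forall fun x => mem_iUnion.2 ⟨⌊x / r⌋, (mem_cell_iff hr).2 rfl⟩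

lemma pairwise_cell {r : ℝ} (hr : 0 < r) :
    Pairwise (Function.onFun Disjoint fun k : ℤ => Ico ((k : ℝ) * r) (((k : ℝ) + 1) * r)) := by
  intro k l hkl
  refine Set.disjoint_left.2 fun x hx hx' => hkl ?_
  rw [← (mem_cell_iff hr).1 hx, ← (mem_cell_iff hr).1 hx']

lemma lintegral_tsum_cell {r : ℝ} (hr : 0 < r) (f : ℝ → ℝ≥0∞) :
    ∫⁻ x, f x = ∑' k : ℤ, ∫⁻ x in Ico ((k : ℝ) * r) (((k : ℝ) + 1) * r), f x := by
  rw [← setLIntegral_univ, ← iUnion_cell hr,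
    lintegral_iUnion (fun k => measurableSet_Ico) (pairwise_cell hr)]



lemma cell_bound {p r : ℝ} (hp : 1 ≤ p) (hr : 0 < r) {w : ℝ → ℝ}
    (hw : AEStronglyMeasurable w volume) (k : ℤ) :
    (‖(∫ t in Ico ((k : ℝ) * r) (((k : ℝ) + 1) * r), w t) / r‖₊ : ℝ≥0∞) ^ p
        * ENNReal.ofReal r
      ≤ ∫⁻ t in Ico ((k : ℝ) * r) (((k : ℝ) + 1) * r), (‖w t‖₊ : ℝ≥0∞) ^ p := by
  have hp0 : 0 < p := lt_of_lt_of_le one_pos hp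
  set I : Set ℝ := Ico ((k : ℝ) * r) (((k : ℝ) + 1) * r) with hI
  set L : ℝ≥0∞ := ∫⁻ t in I, (‖w t‖₊ : ℝ≥0∞) ^ p with hL
  rcases eq_or_ne L ⊤ with h | hLtop
  · rw [h]; exact le_top
  set R : ℝ≥0∞ := ENNReal.ofReal r with hR
  have hR0 : R ≠ 0 := (ENNReal.ofReal_pos.2 hr).ne'
  have hRtop : R ≠ ⊤ := ENNReal.ofReal_ne_top
  have hμI : volume I = R := by
    rw [hI, Real.volume_Ico]; congr 1; ring
  have hq0 : (ENNReal.ofReal p) ≠ 0 := (ENNReal.ofReal_pos.2 hp0).ne'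
  have hqtop : (ENNReal.ofReal p) ≠ ⊤ := ENNReal.ofReal_ne_top
  -- step 1 : norm of the integral is at most the L¹ norm
  have h1 : (‖(∫ t in I, w t)‖₊ : ℝ≥0∞) ≤ ∫⁻ t in I, (‖w t‖₊ : ℝ≥0∞) :=
    enorm_integral_le_lintegral_enorm _
  -- step 2 : L¹ ≤ Lᵖ · rᵖ' (Hölder/Jensen)
  have h2 : (∫⁻ t in I, (‖w t‖₊ : ℝ≥0∞)) ≤ L ^ (1 / p) * R ^ (1 - 1 / p) := by
    have h3 := eLpNorm_le_eLpNorm_mul_rpow_measure_univ (μ := volume.restrict I)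
      (p := 1) (q := ENNReal.ofReal p) (ENNReal.one_le_ofReal.2 hp) hw.restrict
    rw [eLpNorm_one_eq_lintegral_enorm] at h3
    rw [eLpNorm_eq_lintegral_rpow_enorm_toReal hq0 hqtop, ENNReal.toReal_ofReal hp0.le] at h3
    rw [Measure.restrict_apply_univ, hμI] at h3
    rw [hL]; simp only [← enorm_eq_nnnorm]
    simpa using h3
  have hnn : (‖(∫ t in I, w t) / r‖₊ : ℝ≥0∞) = (‖(∫ t in I, w t)‖₊ : ℝ≥0∞) / R := by
    rw [← enorm_eq_nnnorm, ← enorm_eq_nnnorm, ← ofReal_norm, ← ofReal_norm, norm_div,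
      Real.norm_eq_abs r, abs_of_pos hr, ENNReal.ofReal_div_of_pos hr]
  have hmain : (‖(∫ t in I, w t) / r‖₊ : ℝ≥0∞) ≤ L ^ (1 / p) * R ^ (-(1 / p)) := by
    rw [hnn]
    have : (‖(∫ t in I, w t)‖₊ : ℝ≥0∞) / R ≤ (L ^ (1 / p) * R ^ (1 - 1 / p)) / R :=
      ENNReal.div_le_div_right (h1.trans h2) R
    refine this.trans (le_of_eq ?_)
    rw [div_eq_mul_inv, mul_assoc, ← ENNReal.rpow_neg_one R,
      ← ENNReal.rpow_add _ _ hR0 hRtop,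
      show (1 - 1 / p) + (-1 : ℝ) = -(1 / p) from by ring]
  calc (‖(∫ t in I, w t) / r‖₊ : ℝ≥0∞) ^ p * R
      ≤ (L ^ (1 / p) * R ^ (-(1 / p))) ^ p * R := by
        gcongr
    _ = L * R⁻¹ * R := by
        rw [ENNReal.mul_rpow_of_ne_top (ENNReal.rpow_ne_top_of_nonneg (by positivity) hLtop)
          (by
            rw [ENNReal.rpow_neg]
            exact ENNReal.inv_ne_top.2 (ENNReal.rpow_pos (ENNReal.ofReal_pos.2 hr) hRtop).ne')]
        rw [← ENNReal.rpow_mul, ← ENNReal.rpow_mul]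
        rw [one_div_mul_cancel hp0.ne', neg_mul, one_div_mul_cancel hp0.ne',
          ENNReal.rpow_one, ENNReal.rpow_neg_one]
    _ = L := by
        rw [mul_assoc, ENNReal.inv_mul_cancel hR0 hRtop, mul_one]

lemma avg_eLpNorm_le {p r : ℝ} (hp : 1 ≤ p) (hr : 0 < r) {w : ℝ → ℝ}
    (hw : AEStronglyMeasurable w volume) :
    eLpNorm (fun x => (∫ t in Ico ((⌊x / r⌋ : ℝ) * r) ((⌊x / r⌋ : ℝ) * r + r), w t) / r)
        (ENNReal.ofReal p) volume
      ≤ eLpNorm w (ENNReal.ofReal p) volume := by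
  have hp0 : 0 < p := lt_of_lt_of_le one_pos hp
  have hq0 : (ENNReal.ofReal p) ≠ 0 := (ENNReal.ofReal_pos.2 hp0).ne'
  have hqtop : (ENNReal.ofReal p) ≠ ⊤ := ENNReal.ofReal_ne_top
  rw [eLpNorm_eq_lintegral_rpow_enorm_toReal hq0 hqtop, eLpNorm_eq_lintegral_rpow_enorm_toReal hq0 hqtop,
    ENNReal.toReal_ofReal hp0.le]
  apply ENNReal.rpow_le_rpow _ (by positivity)
  set a : ℤ → ℝ := fun k => (∫ t in Ico ((k : ℝ) * r) (((k : ℝ) + 1) * r), w t) / r with ha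
  have hcong : ∀ x : ℝ, (∫ t in Ico ((⌊x / r⌋ : ℝ) * r) ((⌊x / r⌋ : ℝ) * r + r), w t) / r
      = a ⌊x / r⌋ := by
    intro x
    rw [show (⌊x / r⌋ : ℝ) * r + r = ((⌊x / r⌋ : ℝ) + 1) * r from by ring]
  calc ∫⁻ x, (‖(∫ t in Ico ((⌊x / r⌋ : ℝ) * r) ((⌊x / r⌋ : ℝ) * r + r), w t) / r‖₊ : ℝ≥0∞) ^ p
      = ∑' k : ℤ, ∫⁻ x in Ico ((k : ℝ) * r) (((k : ℝ) + 1) * r),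
          (‖(∫ t in Ico ((⌊x / r⌋ : ℝ) * r) ((⌊x / r⌋ : ℝ) * r + r), w t) / r‖₊ : ℝ≥0∞) ^ p :=
        lintegral_tsum_cell hr _
    _ = ∑' k : ℤ, (‖a k‖₊ : ℝ≥0∞) ^ p * ENNReal.ofReal r := by
        refine tsum_congr fun k => ?_
        rw [show (∫⁻ x in Ico ((k : ℝ) * r) (((k : ℝ) + 1) * r),
            (‖(∫ t in Ico ((⌊x / r⌋ : ℝ) * r) ((⌊x / r⌋ : ℝ) * r + r), w t) / r‖₊ : ℝ≥0∞) ^ p)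
            = ∫⁻ _x in Ico ((k : ℝ) * r) (((k : ℝ) + 1) * r), (‖a k‖₊ : ℝ≥0∞) ^ p from
          setLIntegral_congr_fun measurableSet_Ico (fun x hx => by
            rw [hcong x, (mem_cell_iff hr).1 hx])]
        rw [setLIntegral_const, Real.volume_Ico]
        congr 2
        ring
    _ ≤ ∑' k : ℤ, ∫⁻ t in Ico ((k : ℝ) * r) (((k : ℝ) + 1) * r), (‖w t‖₊ : ℝ≥0∞) ^ p := by
        refine ENNReal.tsum_le_tsum fun k => ?_
        have := cell_bound hp hr hw k
        simpa [ha] using this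
    _ = ∫⁻ x, (‖w x‖₊ : ℝ≥0∞) ^ p := (lintegral_tsum_cell hr _).symm



end ApproxDimOne

set_option maxHeartbeats 1000000 in
open ApproxDimOne in
theorem approximation_dim_one
    (p : ℝ) (hp : 1 ≤ p) (ε : ℝ) (hε : 0 < ε)
    (u u' : ℝ → ℝ) (hderiv : ∀ x, HasDerivAt u (u' x) x)
    (hu : MemLp u (ENNReal.ofReal p) volume)
    (hu' : MemLp u' (ENNReal.ofReal p) volume) :
    ∃ r > (0 : ℝ), ∃ h : ℝ,
      (∫ x, |u' x -
        (u (h + (⌊(x - h) / r⌋ + 1) * r) - u (h + ⌊(x - h) / r⌋ * r)) / r| ^ p)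
        ≤ ε := by
  have hp0 : 0 < p := lt_of_lt_of_le one_pos hp
  set q : ℝ≥0∞ := ENNReal.ofReal p with hqdef
  have hq0 : q ≠ 0 := (ENNReal.ofReal_pos.2 hp0).ne'
  have hqtop : q ≠ ⊤ := ENNReal.ofReal_ne_top
  have hq1 : 1 ≤ q := ENNReal.one_le_ofReal.2 hp
  set η : ℝ := ε ^ (1 / p) with hηdef
  have hη0 : 0 < η := Real.rpow_pos_of_pos hε _
  set η3 : ℝ := η / 3 with hη3def
  have hη30 : 0 < η3 := by positivity
  -- a continuous compactly supported approximation of `u'`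
  obtain ⟨g, g_supp, hg_close, g_cont, g_mem⟩ :=
    hu'.exists_hasCompactSupport_eLpNorm_sub_le hqtop (ε := ENNReal.ofReal η3)
      (ENNReal.ofReal_pos.2 hη30).ne'
  -- a bound for the support of `g`
  obtain ⟨R0, hR0⟩ := g_supp.isBounded.subset_closedBall 0
  set R : ℝ := |R0| with hRdef
  have hRnn : 0 ≤ R := abs_nonneg _
  have hsupp : tsupport g ⊆ Icc (-R) R := by
    refine hR0.trans ?_
    rw [Real.closedBall_eq_Icc]
    apply Icc_subset_Icc
    · simp only [zero_sub, hRdef, neg_le_neg_iff]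
      exact le_abs_self R0
    · simpa [hRdef] using le_abs_self R0
  set M : ℝ := 2 * R + 4 with hMdef
  have hM0 : 0 < M := by positivity
  -- the modulus δ
  set δ : ℝ := η3 / (max 1 M) ^ (1 / p) with hδdef
  have hmax0 : (0 : ℝ) < max 1 M := lt_of_lt_of_le one_pos (le_max_left _ _)
  have hδ0 : 0 < δ := div_pos hη30 (Real.rpow_pos_of_pos hmax0 _)
  have hδM : δ ^ p * M ≤ η3 ^ p := by
    have h1 : δ ^ p = η3 ^ p / max 1 M := by
      rw [hδdef, Real.div_rpow hη30.le (Real.rpow_nonneg hmax0.le _),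
        ← Real.rpow_mul hmax0.le, one_div_mul_cancel hp0.ne', Real.rpow_one]
    have h2 : M / max 1 M ≤ 1 := (div_le_one hmax0).2 (le_max_right _ _)
    calc δ ^ p * M = η3 ^ p * (M / max 1 M) := by rw [h1]; ring
      _ ≤ η3 ^ p * 1 := by
          refine mul_le_mul_of_nonneg_left h2 ?_
          positivity
      _ = η3 ^ p := mul_one _
  -- uniform continuity of `g` on a big compact interval
  have hUC := (isCompact_Icc (a := -(R + 3)) (b := R + 3)).uniformContinuousOn_of_continuous
    g_cont.continuousOn
  rw [Metric.uniformContinuousOn_iff] at hUC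
  obtain ⟨η', hη'0, hη'⟩ := hUC δ hδ0
  -- the mesh size
  set r : ℝ := min 1 (η' / 2) with hrdef
  have hr0 : 0 < r := lt_min one_pos (by positivity)
  have hr1 : r ≤ 1 := min_le_left _ _
  have hrη' : r < η' := lt_of_le_of_lt (min_le_right _ _) (by linarith)
  refine ⟨r, hr0, 0, ?_⟩
  -- the averaging operator
  set a : (ℝ → ℝ) → ℤ → ℝ :=
    fun w k => (∫ t in Ico ((k : ℝ) * r) (((k : ℝ) + 1) * r), w t) / r with hadef
  set A : (ℝ → ℝ) → ℝ → ℝ := fun w x => a w ⌊x / r⌋ with hAdef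
  have hAm : ∀ w : ℝ → ℝ, AEStronglyMeasurable (A w) volume := fun w =>
    ((measurable_from_top (f := a w)).comp ((measurable_id.div_const r).floor)).aestronglyMeasurable
  have hu'int : ∀ s : Set ℝ, MeasurableSet s → ∀ k : ℤ, True := fun _ _ _ => trivial
  have hu'cell : ∀ k : ℤ, IntegrableOn u' (Ico ((k : ℝ) * r) (((k : ℝ) + 1) * r)) volume :=
    fun k => (hu'.restrict _).integrable hq1
  have hgint : Integrable g volume := g_cont.integrable_of_hasCompactSupport g_supp
  -- identification of the interpolant slope with the average of `u'`
  have hFTC : ∀ x : ℝ,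
      (u (((⌊x / r⌋ : ℝ) + 1) * r) - u ((⌊x / r⌋ : ℝ) * r)) / r = A u' x := by
    intro x
    set k : ℤ := ⌊x / r⌋ with hk
    have hle : (k : ℝ) * r ≤ ((k : ℝ) + 1) * r := by nlinarith
    have hii : IntervalIntegrable u' volume ((k : ℝ) * r) (((k : ℝ) + 1) * r) := by
      rw [intervalIntegrable_iff_integrableOn_Ioc_of_le hle]
      exact (hu'.restrict _).integrable hq1
    have hint : ∫ t in (k : ℝ) * r..(((k : ℝ) + 1) * r), u' t
        = u (((k : ℝ) + 1) * r) - u ((k : ℝ) * r) :=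
      intervalIntegral.integral_eq_sub_of_hasDerivAt (fun t _ => hderiv t) hii
    simp only [hAdef, hadef]
    rw [Measure.restrict_congr_set Ico_ae_eq_Ioc, ← intervalIntegral.integral_of_le hle, hint]
  -- term 1
  have hterm1 : eLpNorm (fun x => u' x - g x) q volume ≤ ENNReal.ofReal η3 := hg_close
  -- term 3
  have hterm3 : eLpNorm (fun x => A g x - A u' x) q volume ≤ ENNReal.ofReal η3 := by
    have heq : (fun x => A g x - A u' x) = fun x =>
        (∫ t in Ico ((⌊x / r⌋ : ℝ) * r) ((⌊x / r⌋ : ℝ) * r + r), (g - u') t) / r := by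
      funext x
      rw [show (⌊x / r⌋ : ℝ) * r + r = ((⌊x / r⌋ : ℝ) + 1) * r from by ring]
      simp only [hAdef, hadef, Pi.sub_apply]
      rw [integral_sub hgint.integrableOn (hu'cell ⌊x / r⌋), sub_div]
    rw [heq]
    refine (avg_eLpNorm_le hp hr0 (g_cont.aestronglyMeasurable.sub hu'.1)).trans ?_
    rw [← neg_sub u' g, eLpNorm_neg]
    exact hg_close
  -- term 2
  have hcellx : ∀ x : ℝ, x ∈ Ico ((⌊x / r⌋ : ℝ) * r) (((⌊x / r⌋ : ℝ) + 1) * r) :=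
    fun x => (mem_cell_iff hr0).2 rfl
  have hzero : ∀ x : ℝ, x ∉ Icc (-(R + 2)) (R + 2) → g x - A g x = 0 := by
    intro x hx
    have hgx : g x = 0 := by
      apply image_eq_zero_of_notMem_tsupport
      intro hmem
      exact hx (Icc_subset_Icc (by linarith) (by linarith) (hsupp hmem))
    have hAgx : A g x = 0 := by
      simp only [hAdef, hadef]
      rw [setIntegral_congr_fun measurableSet_Ico (g := fun _ => (0 : ℝ)) ?_, integral_zero,
        zero_div]
      intro t ht
      apply image_eq_zero_of_notMem_tsupport
      intro hmem
      have ht1 := (hsupp hmem).1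
      have ht2 := (hsupp hmem).2
      have hx1 := (hcellx x).1
      have hx2 := (hcellx x).2
      have ht3 := ht.1
      have ht4 := ht.2
      simp only [mem_Icc, not_and, not_le] at hx
      rcases le_or_gt x (-(R + 2)) with hc | hc
      · nlinarith
      · have := hx (by linarith)
        nlinarith
    rw [hgx, hAgx, sub_zero]
  have hbound : ∀ x : ℝ, x ∈ Icc (-(R + 2)) (R + 2) → |g x - A g x| ≤ δ := by
    intro x hx
    set k : ℤ := ⌊x / r⌋ with hk
    set cell : Set ℝ := Ico ((k : ℝ) * r) (((k : ℝ) + 1) * r) with hcelldef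
    have hx1 := (hcellx x).1
    have hx2 := (hcellx x).2
    have hμcell : volume cell = ENNReal.ofReal r := by
      rw [hcelldef, Real.volume_Ico]; congr 1; ring
    have hμcellfin : volume cell < ⊤ := by rw [hμcell]; exact ENNReal.ofReal_lt_top
    have hxS' : x ∈ Icc (-(R + 3)) (R + 3) := by
      rcases hx with ⟨hxa, hxb⟩
      exact ⟨by linarith, by linarith⟩
    have htS' : ∀ t ∈ cell, t ∈ Icc (-(R + 3)) (R + 3) := by
      intro t ht
      rcases hx with ⟨hxa, hxb⟩
      rcases ht with ⟨hta, htb⟩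
      constructor <;> nlinarith
    have h1 : g x - A g x = (∫ t in cell, (g x - g t)) / r := by
      rw [integral_sub (by
          refine integrableOn_const hμcellfin.ne) hgint.integrableOn,
        setIntegral_const, measureReal_def, hμcell, ENNReal.toReal_ofReal hr0.le]
      simp only [hAdef, hadef, ← hcelldef, ← hk]
      rw [sub_div, smul_eq_mul, mul_comm, mul_div_assoc, div_self hr0.ne', mul_one]
    have h2 : |∫ t in cell, (g x - g t)| ≤ δ * r := by
      have hb : ∀ t ∈ cell, ‖g x - g t‖ ≤ δ := by
        intro t ht
        rw [Real.norm_eq_abs, ← Real.dist_eq]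
        refine le_of_lt (hη' x hxS' t (htS' t ht) ?_)
        rw [Real.dist_eq]
        rcases ht with ⟨hta, htb⟩
        rw [abs_lt]
        constructor <;> nlinarith
      have hm : AEStronglyMeasurable (fun t => g x - g t) (volume.restrict cell) :=
        (aestronglyMeasurable_const.sub g_cont.aestronglyMeasurable).restrict
      have h3 := norm_setIntegral_le_of_norm_le_const hμcellfin hb
      rw [measureReal_def, hμcell, ENNReal.toReal_ofReal hr0.le, Real.norm_eq_abs] at h3
      exact h3
    rw [h1, abs_div, abs_of_pos hr0, div_le_iff₀ hr0]
    exact h2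
  have hterm2 : eLpNorm (fun x => g x - A g x) q volume ≤ ENNReal.ofReal η3 := by
    rw [eLpNorm_eq_lintegral_rpow_enorm_toReal hq0 hqtop, ENNReal.toReal_ofReal hp0.le]
    have hlin : (∫⁻ x, (‖g x - A g x‖₊ : ℝ≥0∞) ^ p)
        ≤ ENNReal.ofReal δ ^ p * ENNReal.ofReal M := by
      have hpt : ∀ x, (‖g x - A g x‖₊ : ℝ≥0∞) ^ p
          ≤ (Icc (-(R + 2)) (R + 2)).indicator (fun _ => ENNReal.ofReal δ ^ p) x := by
        intro x
        by_cases hx : x ∈ Icc (-(R + 2)) (R + 2)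
        · rw [indicator_of_mem hx]
          refine ENNReal.rpow_le_rpow ?_ hp0.le
          rw [← enorm_eq_nnnorm, ← ofReal_norm]
          exact ENNReal.ofReal_le_ofReal ((Real.norm_eq_abs _) ▸ hbound x hx)
        · rw [indicator_of_notMem hx, hzero x hx]
          simp [ENNReal.zero_rpow_of_pos hp0]
      calc (∫⁻ x, (‖g x - A g x‖₊ : ℝ≥0∞) ^ p)
          ≤ ∫⁻ x, (Icc (-(R + 2)) (R + 2)).indicator (fun _ => ENNReal.ofReal δ ^ p) x :=
            lintegral_mono hpt
        _ = ENNReal.ofReal δ ^ p * volume (Icc (-(R + 2)) (R + 2)) := by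
            rw [lintegral_indicator measurableSet_Icc, setLIntegral_const]
        _ = ENNReal.ofReal δ ^ p * ENNReal.ofReal M := by
            rw [Real.volume_Icc]
            congr 1
            rw [hMdef]
            ring
    refine le_trans (ENNReal.rpow_le_rpow hlin (by positivity)) ?_
    rw [ENNReal.ofReal_rpow_of_nonneg hδ0.le hp0.le, ← ENNReal.ofReal_mul (by positivity)]
    refine le_trans (ENNReal.rpow_le_rpow (ENNReal.ofReal_le_ofReal hδM) (by positivity)) ?_
    rw [ENNReal.ofReal_rpow_of_nonneg (by positivity : (0:ℝ) ≤ η3 ^ p)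
        (by positivity : (0:ℝ) ≤ 1 / p),
      ← Real.rpow_mul hη30.le, mul_one_div_cancel hp0.ne', Real.rpow_one]
  -- assembling the three terms
  have hdecomp : (fun x => u' x - A u' x)
      = (fun x => u' x - g x) + ((fun x => g x - A g x) + (fun x => A g x - A u' x)) := by
    funext x
    simp only [Pi.add_apply]
    ring
  have hm2 : AEStronglyMeasurable (fun x => g x - A g x) volume :=
    g_cont.aestronglyMeasurable.sub (hAm g)
  have hm3 : AEStronglyMeasurable (fun x => A g x - A u' x) volume :=
    (hAm g).sub (hAm u')
  have hkey : eLpNorm (fun x => u' x - A u' x) q volume ≤ ENNReal.ofReal η := by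
    rw [hdecomp]
    refine (eLpNorm_add_le (hu'.1.sub g_cont.aestronglyMeasurable) (hm2.add hm3) hq1).trans ?_
    refine (add_le_add hterm1
      ((eLpNorm_add_le hm2 hm3 hq1).trans (add_le_add hterm2 hterm3))).trans ?_
    rw [← ENNReal.ofReal_add hη30.le hη30.le, ← ENNReal.ofReal_add hη30.le (by positivity)]
    refine ENNReal.ofReal_le_ofReal ?_
    rw [hη3def]
    linarith
  have hF : AEStronglyMeasurable (fun x => u' x - A u' x) volume := hu'.1.sub (hAm u')
  have hlint : (∫⁻ x, (‖u' x - A u' x‖₊ : ℝ≥0∞) ^ p) ≤ ENNReal.ofReal ε := by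
    rw [eLpNorm_eq_lintegral_rpow_enorm_toReal hq0 hqtop, ENNReal.toReal_ofReal hp0.le] at hkey
    have h2 := ENNReal.rpow_le_rpow hkey hp0.le
    rw [← ENNReal.rpow_mul, one_div_mul_cancel hp0.ne', ENNReal.rpow_one] at h2
    rw [ENNReal.ofReal_rpow_of_nonneg hη0.le hp0.le, hηdef, ← Real.rpow_mul hε.le,
      one_div_mul_cancel hp0.ne', Real.rpow_one] at h2
    exact h2
  simp only [zero_add, sub_zero]
  have hint_eq : (∫ x, |u' x - (u (((⌊x / r⌋ : ℝ) + 1) * r) - u ((⌊x / r⌋ : ℝ) * r)) / r| ^ p)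
      = ∫ x, |u' x - A u' x| ^ p := by
    refine integral_congr_ae (Filter.Eventually.of_forall fun x => ?_)
    simp only [hFTC x]
  rw [hint_eq]
  have habs : AEStronglyMeasurable (fun x => |u' x - A u' x| ^ p) volume :=
    (Real.continuous_rpow_const hp0.le).comp_aestronglyMeasurable hF.norm
  rw [integral_eq_lintegral_of_nonneg_ae
    (Filter.Eventually.of_forall fun x => Real.rpow_nonneg (abs_nonneg _) p) habs]
  have hconv : (∫⁻ x, ENNReal.ofReal (|u' x - A u' x| ^ p))
      = ∫⁻ x, (‖u' x - A u' x‖₊ : ℝ≥0∞) ^ p := by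
    refine lintegral_congr fun x => ?_
    rw [← enorm_eq_nnnorm, ← ofReal_norm, ENNReal.ofReal_rpow_of_nonneg (norm_nonneg _) hp0.le,
      Real.norm_eq_abs]
  rw [hconv]
  exact le_trans (ENNReal.toReal_mono ENNReal.ofReal_ne_top hlint)
    (le_of_eq (ENNReal.toReal_ofReal hε.le))
end

section
/- Let u ∈ W^{1,p}(ℝ), p ∈ [1,∞), be absolutely continuous, r > 0, and for h ∈ ℝ let v_h^r be the piecewise affine interpolant of u on the grid h + rℤ. Then (1/(2r)) ∫_{-r}^{r} ( ∫_ℝ |u′ − (v_h^r)′|^p ) dh ≤ C sup_{|t| ≤ r} ∫_ℝ |u′(x) − u′(x+t)|^p dx for a constant C depending only on p. -/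
open MeasureTheory Set intervalIntegral
open scoped ENNReal

theorem averaged_interpolation_estimate_dim_one
    (p : ℝ) (hp : 1 ≤ p) :
    ∃ C > (0 : ℝ), ∀ (u u' : ℝ → ℝ), (∀ x, HasDerivAt u (u' x) x) →
      MemLp u (ENNReal.ofReal p) volume →
      MemLp u' (ENNReal.ofReal p) volume →
      ∀ r > (0 : ℝ),
        (1 / (2 * r)) * ∫ h in (-r)..r,
            (∫ x, |u' x -
              (u (h + (⌊(x - h) / r⌋ + 1) * r) - u (h + ⌊(x - h) / r⌋ * r)) / r| ^ p)
          ≤ C * ⨆ t : Set.Icc (-r) r, ∫ x, |u' x - u' (x + t)| ^ p := by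
  refine ⟨2, two_pos, ?_⟩
  intro u u' hderiv hu hu' r hr
  have hp0 : (0 : ℝ) < p := lt_of_lt_of_le one_pos hp
  set P : ℝ≥0∞ := ENNReal.ofReal p with hPdef
  have hP1 : (1 : ℝ≥0∞) ≤ P := by
    rw [hPdef]; exact ENNReal.one_le_ofReal.mpr hp
  have hP0 : P ≠ 0 := by
    rw [hPdef]; simpa using hp0
  have hPtop : P ≠ ⊤ := ENNReal.ofReal_ne_top
  have hPtoReal : P.toReal = p := ENNReal.toReal_ofReal hp0.le
  have hu'm : Measurable u' := by
    have : u' = deriv u := funext fun x => ((hderiv x).deriv).symm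
    rw [this]; exact measurable_deriv u
  have hucont : Continuous u := by
    rw [continuous_iff_continuousAt]
    exact fun x => (hderiv x).continuousAt
  -- realized supremum
  set g : ℝ → ℝ := fun t => ∫ x, |u' x - u' (x + t)| ^ p with hgdef
  set S : ℝ := ⨆ t : Set.Icc (-r) r, g ↑t with hSdef
  -- basic integrability
  have habs : ∀ v : ℝ → ℝ, MemLp v P volume → Integrable (fun x => |v x| ^ p) := by
    intro v hv
    simpa [Real.norm_eq_abs, hPtoReal] using hv.integrable_norm_rpow hP0 hPtop
  have hshift : ∀ t : ℝ, MemLp (fun x => u' (x + t)) P volume := fun t =>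
    hu'.comp_measurePreserving (measurePreserving_add_right volume t)
  have hdiffmem : ∀ t : ℝ, MemLp (fun x => u' x - u' (x + t)) P volume := fun t =>
    hu'.sub (hshift t)
  have hint : ∀ t : ℝ, Integrable (fun x => |u' x - u' (x + t)| ^ p) := fun t => by
    simpa using habs _ (hdiffmem t)
  have hg0 : ∀ t : ℝ, 0 ≤ g t := fun t =>
    integral_nonneg fun x => Real.rpow_nonneg (abs_nonneg _) p
  have hS0 : 0 ≤ S := Real.iSup_nonneg fun t => hg0 t
  -- boundedness of the family
  have hptwise : ∀ a b : ℝ, |a - b| ^ p ≤ 2 ^ p * (|a| ^ p + |b| ^ p) := by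
    intro a b
    have h1 : |a - b| ≤ 2 * max |a| |b| := by
      have := abs_sub a b
      rcases le_total |a| |b| with h | h
      · calc |a - b| ≤ |a| + |b| := abs_sub a b
          _ ≤ 2 * max |a| |b| := by rw [max_eq_right h]; linarith
      · calc |a - b| ≤ |a| + |b| := abs_sub a b
          _ ≤ 2 * max |a| |b| := by rw [max_eq_left h]; linarith
    calc |a - b| ^ p ≤ (2 * max |a| |b|) ^ p :=
          Real.rpow_le_rpow (abs_nonneg _) h1 hp0.le
      _ = 2 ^ p * max |a| |b| ^ p :=
          Real.mul_rpow (by norm_num) (le_max_of_le_left (abs_nonneg _))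
      _ ≤ 2 ^ p * (|a| ^ p + |b| ^ p) := by
          have h2 : max |a| |b| ^ p ≤ |a| ^ p + |b| ^ p := by
            rcases le_total |a| |b| with h | h
            · rw [max_eq_right h]
              have := Real.rpow_nonneg (abs_nonneg a) p
              linarith
            · rw [max_eq_left h]
              have := Real.rpow_nonneg (abs_nonneg b) p
              linarith
          have : (0:ℝ) ≤ 2 ^ p := Real.rpow_nonneg (by norm_num) p
          nlinarith
  have hbd : ∀ t : ℝ, g t ≤ 2 ^ p * (2 * ∫ x, |u' x| ^ p) := by
    intro t
    have h2 : Integrable (fun x => 2 ^ p * (|u' x| ^ p + |u' (x + t)| ^ p)) volume :=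
      (((habs u' hu').add (habs _ (hshift t)))).const_mul _
    calc g t ≤ ∫ x, 2 ^ p * (|u' x| ^ p + |u' (x + t)| ^ p) := by
          refine integral_mono_of_nonneg (ae_of_all _ fun x => Real.rpow_nonneg (abs_nonneg _) p)
            h2 (ae_of_all _ fun x => hptwise (u' x) (u' (x + t)))
      _ = 2 ^ p * ((∫ x, |u' x| ^ p) + ∫ x, |u' (x + t)| ^ p) := by
          rw [MeasureTheory.integral_const_mul, integral_add (habs u' hu') (habs _ (hshift t))]
      _ = 2 ^ p * (2 * ∫ x, |u' x| ^ p) := by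
          rw [integral_add_right_eq_self (fun x => |u' x| ^ p) t]; ring
  have hbdd : BddAbove (Set.range fun t : Set.Icc (-r) r => g ↑t) := by
    refine ⟨2 ^ p * (2 * ∫ x, |u' x| ^ p), ?_⟩
    rintro y ⟨t, rfl⟩
    exact hbd ↑t
  have hgS : ∀ t ∈ Set.Icc (-r) r, g t ≤ S := fun t ht => le_ciSup hbdd ⟨t, ht⟩
  -- the ℝ≥0∞ kernel
  set D : ℝ → ℝ → ℝ≥0∞ := fun x y => ENNReal.ofReal (|u' x - u' y| ^ p) with hDdef
  have hrpowm : Measurable fun s : ℝ => s ^ p :=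
    (Real.continuous_rpow_const hp0.le).measurable
  have hDm : Measurable (Function.uncurry fun x t => D x (x + t)) := by
    apply ENNReal.measurable_ofReal.comp
    apply hrpowm.comp
    exact ((hu'm.comp measurable_fst).sub (hu'm.comp (measurable_fst.add measurable_snd))).abs
  have hDxm : ∀ x : ℝ, Measurable fun y => D x y := by
    intro x
    apply ENNReal.measurable_ofReal.comp
    exact hrpowm.comp ((measurable_const.sub hu'm).abs)
  have hGle : ∀ t ∈ Set.Icc (-r) r, (∫⁻ x, D x (x + t)) ≤ ENNReal.ofReal S := by
    intro t ht
    have h1 : ENNReal.ofReal (g t) = ∫⁻ x, D x (x + t) :=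
      ofReal_integral_eq_lintegral_ofReal (hint t)
        (ae_of_all _ fun x => Real.rpow_nonneg (abs_nonneg _) p)
    rw [← h1]
    exact ENNReal.ofReal_le_ofReal (hgS t ht)
  -- integrability of u' on intervals
  have hIOn : ∀ a b : ℝ, IntegrableOn u' (Ioc a b) volume := by
    intro a b
    haveI : Fact (volume (Ioc a b) < ⊤) := ⟨measure_Ioc_lt_top⟩
    exact ((hu'.restrict _).integrable hP1)
  have hII : ∀ a b : ℝ, IntervalIntegrable u' volume a b := by
    intro a b
    rw [intervalIntegrable_iff]
    haveI : Fact (volume (Set.uIoc a b) < ⊤) := ⟨measure_Ioc_lt_top⟩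
    exact ((hu'.restrict _).integrable hP1)
  have hFTC : ∀ a b : ℝ, u b - u a = ∫ y in a..b, u' y := fun a b =>
    (intervalIntegral.integral_eq_sub_of_hasDerivAt (fun y _ => hderiv y) (hII a b)).symm
  -- the per-h bound
  have key : ∀ h : ℝ,
      (∫ x, |u' x - (u (h + (⌊(x - h) / r⌋ + 1) * r) - u (h + ⌊(x - h) / r⌋ * r)) / r| ^ p)
        ≤ 2 * S := by
    intro h
    set α : ℝ → ℝ := fun x => h + ⌊(x - h) / r⌋ * r with hαdef
    set β : ℝ → ℝ := fun x => h + (⌊(x - h) / r⌋ + 1) * r with hβdef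
    set A : ℝ → ℝ := fun x => (u (β x) - u (α x)) / r with hAdef
    have hαβ : ∀ x, β x = α x + r := by intro x; simp only [hαdef, hβdef]; ring
    have hαx : ∀ x, α x ≤ x := by
      intro x
      have h1 : (⌊(x - h) / r⌋ : ℝ) ≤ (x - h) / r := Int.floor_le _
      have h2 : (⌊(x - h) / r⌋ : ℝ) * r ≤ x - h := by
        calc (⌊(x - h) / r⌋ : ℝ) * r ≤ ((x - h) / r) * r :=
              mul_le_mul_of_nonneg_right h1 hr.le
          _ = x - h := div_mul_cancel₀ _ hr.ne'
      simp only [hαdef]; linarith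
    have hxβ : ∀ x, x < β x := by
      intro x
      have h1 : (x - h) / r < (⌊(x - h) / r⌋ : ℝ) + 1 := Int.lt_floor_add_one _
      have h2 : x - h < ((⌊(x - h) / r⌋ : ℝ) + 1) * r := by
        calc x - h = ((x - h) / r) * r := (div_mul_cancel₀ _ hr.ne').symm
          _ < ((⌊(x - h) / r⌋ : ℝ) + 1) * r := by
              exact mul_lt_mul_of_pos_right h1 hr
      simp only [hβdef]; linarith
    -- measurability of A
    have hαm : Measurable α := by
      apply measurable_const.add
      apply Measurable.mul_const
      exact measurable_from_top.comp (((measurable_id.sub measurable_const).div_const r).floor)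
    have hβm : Measurable β := by
      apply measurable_const.add
      apply Measurable.mul_const
      apply Measurable.add_const
      exact measurable_from_top.comp (((measurable_id.sub measurable_const).div_const r).floor)
    have hAm : Measurable A :=
      (((hucont.measurable.comp hβm).sub (hucont.measurable.comp hαm))).div_const r
    have hfm : Measurable fun x => |u' x - A x| ^ p :=
      hrpowm.comp ((hu'm.sub hAm).abs)
    -- pointwise bound in ℝ≥0∞
    have hrne0 : ENNReal.ofReal r ≠ 0 := by simp [hr]
    have hrnetop : ENNReal.ofReal r ≠ ⊤ := ENNReal.ofReal_ne_top
    have hpt : ∀ x : ℝ, ENNReal.ofReal (|u' x - A x| ^ p) ≤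
        (ENNReal.ofReal r)⁻¹ * ∫⁻ t in Ioc (-r) r, D x (x + t) := by
      intro x
      have hvol : volume (Ioc (α x) (β x)) = ENNReal.ofReal r := by
        rw [Real.volume_Ioc, hαβ]; ring_nf
      have hIx : IntegrableOn (fun y => u' x - u' y) (Ioc (α x) (β x)) volume := by
        exact (integrableOn_const measure_Ioc_lt_top.ne).sub (hIOn _ _)
      have hab : α x ≤ β x := (hαx x).trans (hxβ x).le
      have hAeq : A x = (∫ y in Ioc (α x) (β x), u' y) / r := by
        rw [hAdef]
        simp only
        rw [hFTC (α x) (β x), intervalIntegral.integral_of_le hab]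
      have hsub : u' x - A x = (∫ y in Ioc (α x) (β x), (u' x - u' y)) / r := by
        rw [MeasureTheory.integral_sub (integrableOn_const (μ := volume) (s := Ioc (α x) (β x)) (C := u' x) measure_Ioc_lt_top.ne) (hIOn _ _)]
        rw [setIntegral_const, measureReal_def, hvol, ENNReal.toReal_ofReal hr.le, hAeq]
        field_simp
        ring
      have habs1 : |u' x - A x| ≤ (∫ y in Ioc (α x) (β x), |u' x - u' y|) / r := by
        have h3 : |∫ y in Ioc (α x) (β x), (u' x - u' y)| ≤
            ∫ y in Ioc (α x) (β x), |u' x - u' y| := by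
          simpa [Real.norm_eq_abs] using
            norm_integral_le_integral_norm (μ := volume.restrict (Ioc (α x) (β x)))
              (fun y => u' x - u' y)
        rw [hsub, abs_div, abs_of_pos hr]
        gcongr
      set c : ℝ := ∫ y in Ioc (α x) (β x), |u' x - u' y| with hcdef
      have hc0 : 0 ≤ c := setIntegral_nonneg measurableSet_Ioc fun y _ => abs_nonneg _
      have hcof : ENNReal.ofReal c = ∫⁻ y in Ioc (α x) (β x), (‖u' x - u' y‖₊ : ℝ≥0∞) := by
        rw [hcdef, ofReal_integral_eq_lintegral_ofReal hIx.abs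
          (ae_of_all _ fun y => abs_nonneg _)]
        simp_rw [← Real.norm_eq_abs, ofReal_norm, enorm_eq_nnnorm]
      have hDof : ∀ y : ℝ, D x y = (‖u' x - u' y‖₊ : ℝ≥0∞) ^ p := by
        intro y
        rw [hDdef]
        simp only
        rw [← ENNReal.ofReal_rpow_of_nonneg (abs_nonneg _) hp0.le, ← Real.norm_eq_abs,
          ofReal_norm, enorm_eq_nnnorm]
      have hrest : (volume.restrict (Ioc (α x) (β x))) Set.univ = ENNReal.ofReal r := by
        rw [Measure.restrict_apply_univ, hvol]
      have hH0 := eLpNorm_le_eLpNorm_mul_rpow_measure_univ (p := 1) (q := P) hP1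
        ((measurable_const.sub hu'm).aestronglyMeasurable :
          AEStronglyMeasurable (fun y => u' x - u' y) (volume.restrict (Ioc (α x) (β x))))
      rw [eLpNorm_one_eq_lintegral_enorm, eLpNorm_eq_lintegral_rpow_enorm_toReal hP0 hPtop, hrest,
        hPtoReal] at hH0
      have hH1 : (ENNReal.ofReal c) ^ p ≤
          (∫⁻ y in Ioc (α x) (β x), D x y) * (ENNReal.ofReal r) ^ (p - 1) := by
        have h4 := ENNReal.rpow_le_rpow hH0 hp0.le
        rw [ENNReal.mul_rpow_of_nonneg _ _ hp0.le, ← ENNReal.rpow_mul, ← ENNReal.rpow_mul] at h4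
        have e1 : 1 / p * p = 1 := by field_simp
        have e2 : (1 / (1 : ℝ≥0∞).toReal - 1 / p) * p = p - 1 := by
          simp only [ENNReal.toReal_one]
          field_simp
        rw [e1, e2, ENNReal.rpow_one] at h4
        rw [hcof]
        simp_rw [hDof]
        exact h4
      have hchg : (∫⁻ y in Ioc (α x) (β x), D x y)
          = ∫⁻ t in Ioc (α x - x) (β x - x), D x (x + t) := by
        rw [← preimage_const_add_Ioc]
        exact ((measurePreserving_add_left volume x).setLIntegral_comp_preimage
          measurableSet_Ioc (hDxm x)).symm
      have hsubset : Ioc (α x - x) (β x - x) ⊆ Ioc (-r) r := by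
        have h6 := hαx x
        have h7 := hxβ x
        have h8 := hαβ x
        apply Ioc_subset_Ioc <;> linarith
      have hmono : (∫⁻ y in Ioc (α x) (β x), D x y) ≤ ∫⁻ t in Ioc (-r) r, D x (x + t) := by
        rw [hchg]
        exact lintegral_mono_set hsubset
      calc ENNReal.ofReal (|u' x - A x| ^ p)
          ≤ ENNReal.ofReal ((c / r) ^ p) :=
            ENNReal.ofReal_le_ofReal (Real.rpow_le_rpow (abs_nonneg _) habs1 hp0.le)
        _ = (ENNReal.ofReal c) ^ p / (ENNReal.ofReal r) ^ p := by
            rw [Real.div_rpow hc0 hr.le, ENNReal.ofReal_div_of_pos (Real.rpow_pos_of_pos hr p),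
              ← ENNReal.ofReal_rpow_of_nonneg hc0 hp0.le,
              ← ENNReal.ofReal_rpow_of_nonneg hr.le hp0.le]
        _ ≤ ((∫⁻ y in Ioc (α x) (β x), D x y) * (ENNReal.ofReal r) ^ (p - 1)) /
              (ENNReal.ofReal r) ^ p :=
            ENNReal.div_le_div_right hH1 _
        _ = (∫⁻ y in Ioc (α x) (β x), D x y) *
              ((ENNReal.ofReal r) ^ (p - 1) / (ENNReal.ofReal r) ^ p) := by
            rw [mul_div_assoc]
        _ = (ENNReal.ofReal r)⁻¹ * ∫⁻ y in Ioc (α x) (β x), D x y := by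
            rw [← ENNReal.rpow_sub _ _ hrne0 hrnetop, show p - 1 - p = -1 by ring,
              ENNReal.rpow_neg_one, mul_comm]
        _ ≤ (ENNReal.ofReal r)⁻¹ * ∫⁻ t in Ioc (-r) r, D x (x + t) :=
            mul_le_mul_right hmono _
    -- integrate the pointwise bound
    have h1 : (∫⁻ x, ENNReal.ofReal (|u' x - A x| ^ p)) ≤ ENNReal.ofReal (2 * S) := by
      calc (∫⁻ x, ENNReal.ofReal (|u' x - A x| ^ p))
          ≤ ∫⁻ x, (ENNReal.ofReal r)⁻¹ * ∫⁻ t in Ioc (-r) r, D x (x + t) := lintegral_mono hpt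
        _ = (ENNReal.ofReal r)⁻¹ * ∫⁻ x, ∫⁻ t in Ioc (-r) r, D x (x + t) :=
            lintegral_const_mul' _ _ (by simp [hr])
        _ = (ENNReal.ofReal r)⁻¹ * ∫⁻ t in Ioc (-r) r, ∫⁻ x, D x (x + t) := by
            rw [lintegral_lintegral_swap hDm.aemeasurable]
        _ ≤ (ENNReal.ofReal r)⁻¹ * ∫⁻ _t in Ioc (-r) r, ENNReal.ofReal S :=
            mul_le_mul_right (setLIntegral_mono' measurableSet_Ioc fun t ht =>
              hGle t (Ioc_subset_Icc_self ht)) _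
        _ = (ENNReal.ofReal r)⁻¹ * (ENNReal.ofReal S * ENNReal.ofReal (2 * r)) := by
            rw [setLIntegral_const, Real.volume_Ioc, show r - -r = 2 * r by ring]
        _ = ENNReal.ofReal (2 * S) := by
            rw [ENNReal.ofReal_mul (by norm_num : (0:ℝ) ≤ 2),
              ENNReal.ofReal_mul (by norm_num : (0:ℝ) ≤ 2),
              show (ENNReal.ofReal r)⁻¹ * (ENNReal.ofReal S *
                  (ENNReal.ofReal 2 * ENNReal.ofReal r)) =
                ENNReal.ofReal 2 * ENNReal.ofReal S * ((ENNReal.ofReal r)⁻¹ * ENNReal.ofReal r)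
                by ring,
              ENNReal.inv_mul_cancel hrne0 hrnetop, mul_one]
    show (∫ x, |u' x - A x| ^ p) ≤ 2 * S
    calc (∫ x, |u' x - A x| ^ p)
        = (∫⁻ x, ENNReal.ofReal (|u' x - A x| ^ p)).toReal :=
          integral_eq_lintegral_of_nonneg_ae
            (ae_of_all _ fun x => Real.rpow_nonneg (abs_nonneg _) p) hfm.aestronglyMeasurable
      _ ≤ (ENNReal.ofReal (2 * S)).toReal := ENNReal.toReal_mono ENNReal.ofReal_ne_top h1
      _ = 2 * S := ENNReal.toReal_ofReal (by positivity)
  -- assemble the outer average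
  have hnn : ∀ h : ℝ, 0 ≤ ∫ x,
      |u' x - (u (h + (⌊(x - h) / r⌋ + 1) * r) - u (h + ⌊(x - h) / r⌋ * r)) / r| ^ p :=
    fun h => integral_nonneg fun x => Real.rpow_nonneg (abs_nonneg _) p
  have hout : ‖∫ h in (-r)..r, (∫ x,
      |u' x - (u (h + (⌊(x - h) / r⌋ + 1) * r) - u (h + ⌊(x - h) / r⌋ * r)) / r| ^ p)‖
        ≤ (2 * S) * |r - (-r)| :=
    intervalIntegral.norm_integral_le_of_norm_le_const fun h _ => by
      rw [Real.norm_eq_abs, abs_of_nonneg (hnn h)]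
      exact key h
  rw [Real.norm_eq_abs] at hout
  have h5 : (∫ h in (-r)..r, (∫ x,
      |u' x - (u (h + (⌊(x - h) / r⌋ + 1) * r) - u (h + ⌊(x - h) / r⌋ * r)) / r| ^ p))
        ≤ 2 * S * (2 * r) := by
    have h6 := le_trans (le_abs_self _) hout
    have h7 : |r - (-r)| = 2 * r := by
      rw [abs_of_pos (by linarith : (0:ℝ) < r - (-r))]
      ring
    rw [h7] at h6
    exact h6
  calc (1 / (2 * r)) * ∫ h in (-r)..r, (∫ x,
      |u' x - (u (h + (⌊(x - h) / r⌋ + 1) * r) - u (h + ⌊(x - h) / r⌋ * r)) / r| ^ p)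
      ≤ (1 / (2 * r)) * (2 * S * (2 * r)) :=
        mul_le_mul_of_nonneg_left h5 (by positivity)
    _ = 2 * S := by field_simp
end
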